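/- arXiv:1503.01263 — 6 statements merged into one kernel-verified Lean document; each statement's English description precedes it below -/
import Mathlib

section
/- The improper integral (4/π) ∫₀^∞ q^{-3} [π/(1 + e^{4q/π}) − π/2 + q] dq converges and equals 56 ζ(3)/π⁴, where ζ is the Riemann zeta function. -/
open MeasureTheory Real

/-- `ζ(3) = Σ_{n≥1} 1/n³`. -/
noncomputable def zeta3 : ℝ := ∑' n : ℕ, 1 / ((n : ℝ) + 1) ^ 3

open Filter Finset Topology
open scoped ENNReal NNReal

namespace IV0

/-- Term of the partial-fraction expansion of the integrand. -/
noncomputable def psiF (k : ℕ) (q : ℝ) : ℝ :=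
  128 / (π ^ 2 * (2 * (k : ℝ) + 1) ^ 2 * (π ^ 4 * (2 * (k : ℝ) + 1) ^ 2 + 16 * q ^ 2))

/-- The sum of the partial-fraction terms. -/
noncomputable def hh (q : ℝ) : ℝ := ∑' k, psiF k q

/-- Antiderivative of `q^3 * psiF k q`. -/
noncomputable def Phi (k : ℕ) (q : ℝ) : ℝ :=
  4 * q ^ 2 / (π ^ 2 * (2 * (k : ℝ) + 1) ^ 2)
    - π ^ 2 / 4 * Real.log (1 + 16 * q ^ 2 / (π ^ 4 * (2 * (k : ℝ) + 1) ^ 2))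

/-- Antiderivative of the (rescaled) integrand. -/
noncomputable def GG (q : ℝ) : ℝ := q ^ 2 / 2 - π ^ 2 / 4 * Real.log (Real.cosh (2 * q / π))

/-- The numerator function. -/
noncomputable def fF (q : ℝ) : ℝ :=
  q - π / 2 * (Real.sinh (2 * q / π) / Real.cosh (2 * q / π))

lemma m_pos (k : ℕ) : (0 : ℝ) < 2 * (k : ℝ) + 1 := by positivity

lemma denom_pos (k : ℕ) (q : ℝ) :
    0 < π ^ 2 * (2 * (k : ℝ) + 1) ^ 2 * (π ^ 4 * (2 * (k : ℝ) + 1) ^ 2 + 16 * q ^ 2) := by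
  have := Real.pi_pos
  positivity

lemma psiF_nonneg (k : ℕ) (q : ℝ) : 0 ≤ psiF k q := by
  have := denom_pos k q
  unfold psiF; positivity

lemma psiF_cont (k : ℕ) : Continuous (psiF k) := by
  apply Continuous.div continuous_const (by continuity)
  exact fun q => (denom_pos k q).ne'

lemma psiF_le (k : ℕ) (q : ℝ) : psiF k q ≤ 128 / (π ^ 6 * (2 * (k : ℝ) + 1) ^ 4) := by
  have hπ := Real.pi_pos
  have h1 : (0:ℝ) < π ^ 6 * (2 * (k : ℝ) + 1) ^ 4 := by positivity
  have h2 : π ^ 6 * (2 * (k : ℝ) + 1) ^ 4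
      ≤ π ^ 2 * (2 * (k : ℝ) + 1) ^ 2 * (π ^ 4 * (2 * (k : ℝ) + 1) ^ 2 + 16 * q ^ 2) := by
    nlinarith [sq_nonneg q, sq_nonneg ((2 * (k:ℝ) + 1) * π), sq_nonneg π, m_pos k]
  unfold psiF
  exact div_le_div_of_nonneg_left (by norm_num) h1 h2

lemma summable_shift : Summable (fun n : ℕ => 1 / ((n : ℝ) + 1) ^ 2) := by
  have := Real.summable_one_div_nat_pow.mpr (le_refl 2)
  have h := (summable_nat_add_iff 1).mpr this
  refine h.congr fun n => ?_
  push_cast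
  ring

lemma summable_cube : Summable (fun n : ℕ => 1 / ((n : ℝ) + 1) ^ 3) := by
  refine Summable.of_nonneg_of_le (fun n => by positivity) (fun n => ?_) summable_shift
  have h1 : (0:ℝ) < (n : ℝ) + 1 := by positivity
  rw [div_le_div_iff₀ (by positivity) (by positivity)]
  nlinarith [h1]

lemma summable_osq : Summable (fun k : ℕ => 1 / (2 * (k : ℝ) + 1) ^ 2) := by
  refine Summable.of_nonneg_of_le (fun n => by positivity) (fun n => ?_) summable_shift
  have h1 : (0:ℝ) < (n : ℝ) + 1 := by positivity
  rw [div_le_div_iff₀ (by positivity) (by positivity)]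
  nlinarith [h1]

lemma summable_ocube : Summable (fun k : ℕ => 1 / (2 * (k : ℝ) + 1) ^ 3) := by
  refine Summable.of_nonneg_of_le (fun n => by positivity) (fun n => ?_) summable_cube
  have h1 : (0:ℝ) < (n : ℝ) + 1 := by positivity
  rw [div_le_div_iff₀ (by positivity) (by positivity)]
  nlinarith [h1, Nat.cast_nonneg (α := ℝ) n, sq_nonneg ((n:ℝ))]

lemma hasSum_osq : HasSum (fun k : ℕ => 1 / (2 * (k : ℝ) + 1) ^ 2) (π ^ 2 / 8) := by
  have hz := hasSum_zeta_two
  have he : HasSum (fun k : ℕ => 1 / ((2 * k : ℕ) : ℝ) ^ 2) (π ^ 2 / 24) := by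
    have h := hz.mul_left (1/4)
    have : (fun k : ℕ => (1/4) * (1 / (k:ℝ) ^ 2)) = fun k : ℕ => 1 / ((2 * k : ℕ) : ℝ) ^ 2 := by
      funext k
      push_cast
      rcases eq_or_ne (k:ℝ) 0 with h0 | h0
      · simp [h0]
      · field_simp; ring
    rw [this] at h
    convert h using 1
    · rfl
    ring
  have hosum : HasSum (fun k : ℕ => 1 / ((2 * k + 1 : ℕ) : ℝ) ^ 2)
      (∑' k : ℕ, 1 / (2 * (k : ℝ) + 1) ^ 2) := by
    have := summable_osq.hasSum
    refine this.congr_fun fun k => by push_cast; ring_nf  -- wrong direction? check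
  have htot := HasSum.even_add_odd (f := fun n : ℕ => 1 / (n:ℝ) ^ 2) he hosum
  have := hz.unique htot
  have hval : ∑' k : ℕ, 1 / (2 * (k : ℝ) + 1) ^ 2 = π ^ 2 / 8 := by linarith
  have := summable_osq.hasSum
  rwa [hval] at this

lemma hasSum_ocube : HasSum (fun k : ℕ => 1 / (2 * (k : ℝ) + 1) ^ 3) (7 / 8 * zeta3) := by
  have hz : HasSum (fun n : ℕ => 1 / ((n : ℝ) + 1) ^ 3) zeta3 := summable_cube.hasSum
  have ho : HasSum (fun k : ℕ => 1 / (((2 * k + 1 : ℕ) : ℝ) + 1) ^ 3) (zeta3 / 8) := by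
    have h := hz.mul_left (1/8)
    have : (fun k : ℕ => (1/8) * (1 / ((k:ℝ) + 1) ^ 3))
        = fun k : ℕ => 1 / (((2 * k + 1 : ℕ) : ℝ) + 1) ^ 3 := by
      funext k
      push_cast
      have : (0:ℝ) < (k:ℝ) + 1 := by positivity
      field_simp
      ring
    rw [this] at h
    convert h using 1
    · rfl
    ring
  have hesum : HasSum (fun k : ℕ => 1 / (((2 * k : ℕ) : ℝ) + 1) ^ 3)
      (∑' k : ℕ, 1 / (2 * (k : ℝ) + 1) ^ 3) := by
    have := summable_ocube.hasSum
    refine this.congr_fun fun k => by push_cast; ring_nf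
  have htot := HasSum.even_add_odd (f := fun n : ℕ => 1 / ((n:ℝ) + 1) ^ 3) hesum ho
  have := hz.unique htot
  have hval : ∑' k : ℕ, 1 / (2 * (k : ℝ) + 1) ^ 3 = 7 / 8 * zeta3 := by linarith
  have := summable_ocube.hasSum
  rwa [hval] at this

lemma prodsplit (w : ℂ) (n : ℕ) :
    ∏ j ∈ Finset.range (2 * n), (1 - (2 * w) ^ 2 / ((j : ℂ) + 1) ^ 2)
      = (∏ j ∈ Finset.range n, (1 - w ^ 2 / ((j : ℂ) + 1) ^ 2))
        * ∏ k ∈ Finset.range n, (1 - 4 * w ^ 2 / (2 * (k : ℂ) + 1) ^ 2) := by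
  induction n with
  | zero => simp
  | succ n ih =>
    have h2 : 2 * (n + 1) = (2 * n) + 1 + 1 := by ring
    rw [h2, Finset.prod_range_succ, Finset.prod_range_succ, Finset.prod_range_succ,
      Finset.prod_range_succ, ih]
    have hc1 : ((2 * n : ℕ) : ℂ) = 2 * (n : ℂ) := by push_cast; ring
    have hc2 : ((2 * n + 1 : ℕ) : ℂ) = 2 * (n : ℂ) + 1 := by push_cast; ring
    rw [hc1, hc2]
    have hne : ((n : ℂ) + 1) ≠ 0 := Nat.cast_add_one_ne_zero n
    have key : 1 - (2 * w) ^ 2 / (2 * (n : ℂ) + 1 + 1) ^ 2 = 1 - w ^ 2 / ((n : ℂ) + 1) ^ 2 := by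
      have h4 : (2 * (n : ℂ) + 1 + 1) = 2 * ((n:ℂ) + 1) := by ring
      rw [h4]
      congr 1
      rw [mul_pow, mul_pow]
      rw [mul_div_mul_left _ _ (by norm_num : ((2:ℂ))^2 ≠ 0)]
    have key2 : 1 - (2 * w) ^ 2 / (2 * (n : ℂ) + 1) ^ 2
        = 1 - 4 * w ^ 2 / (2 * (n : ℂ) + 1) ^ 2 := by
      congr 2
      ring
    rw [key, key2]
    ring

lemma cosh_prod (t : ℝ) :
    Tendsto (fun n : ℕ => ∏ k ∈ Finset.range n,
        (1 + 4 * t ^ 2 / (π ^ 2 * (2 * (k : ℝ) + 1) ^ 2)))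
      atTop (𝓝 (Real.cosh t)) := by
  rcases eq_or_ne t 0 with rfl | ht
  · simpa using (tendsto_const_nhds : Tendsto (fun _ : ℕ => (1:ℝ)) atTop (𝓝 1))
  have hπ : (π:ℝ) ≠ 0 := Real.pi_ne_zero
  have hπC : ((π:ℝ):ℂ) ≠ 0 := by exact_mod_cast hπ
  set z : ℂ := (t : ℂ) * Complex.I / (π : ℂ) with hzdef
  have hpz : (π : ℂ) * z = (t : ℂ) * Complex.I := by
    rw [hzdef]; field_simp
  have hz2 : z ^ 2 = -(((t ^ 2 / π ^ 2 : ℝ)) : ℂ) := by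
    rw [hzdef]
    push_cast
    rw [div_pow, mul_pow, Complex.I_sq]
    field_simp
  -- each sine-product factor is a positive real
  have hfac : ∀ j : ℕ, (1 - z ^ 2 / ((j : ℂ) + 1) ^ 2)
      = (((1 + t ^ 2 / (π ^ 2 * ((j : ℝ) + 1) ^ 2) : ℝ)) : ℂ) := by
    intro j
    rw [hz2]
    push_cast
    have : (((j:ℝ):ℂ)) = ((j:ℕ):ℂ) := by norm_cast
    field_simp
    ring
  have hfacpos : ∀ j : ℕ, (0:ℝ) < 1 + t ^ 2 / (π ^ 2 * ((j : ℝ) + 1) ^ 2) := by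
    intro j
    have := Real.pi_pos
    positivity
  -- nonvanishing of partial sine products
  have hp_ne : ∀ n : ℕ,
      (π : ℂ) * z * ∏ j ∈ Finset.range n, (1 - z ^ 2 / ((j : ℂ) + 1) ^ 2) ≠ 0 := by
    intro n
    apply mul_ne_zero
    · rw [hpz]
      exact mul_ne_zero (by exact_mod_cast ht) Complex.I_ne_zero
    · apply Finset.prod_ne_zero_iff.mpr
      intro j _
      rw [hfac j]
      exact_mod_cast (hfacpos j).ne'
  have h1 := Complex.tendsto_euler_sin_prod z
  have h2 := Complex.tendsto_euler_sin_prod (2 * z)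
  have hdouble : Tendsto (fun n : ℕ => 2 * n) atTop atTop :=
    tendsto_atTop_atTop.mpr fun b => ⟨b, fun a ha => by omega⟩
  have h2' := h2.comp hdouble
  have h2'' : Tendsto (fun n : ℕ =>
      (2 : ℂ) * ((π : ℂ) * z * ∏ j ∈ Finset.range n, (1 - z ^ 2 / ((j : ℂ) + 1) ^ 2))
        * ∏ k ∈ Finset.range n, (1 - 4 * z ^ 2 / (2 * (k : ℂ) + 1) ^ 2))
      atTop (𝓝 (Complex.sin ((π : ℂ) * (2 * z)))) := by
    refine h2'.congr fun n => ?_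
    show (π:ℂ) * (2 * z) * ∏ j ∈ Finset.range (2 * n), (1 - (2*z) ^ 2 / ((j : ℂ) + 1) ^ 2) = _
    rw [prodsplit z n]
    ring
  have hsin_ne : Complex.sin ((π : ℂ) * z) ≠ 0 := by
    rw [hpz, Complex.sin_mul_I]
    apply mul_ne_zero _ Complex.I_ne_zero
    rw [← Complex.ofReal_sinh]
    exact_mod_cast (Real.sinh_ne_zero.mpr ht)
  have hden : Tendsto (fun n : ℕ =>
      (2 : ℂ) * ((π : ℂ) * z * ∏ j ∈ Finset.range n, (1 - z ^ 2 / ((j : ℂ) + 1) ^ 2)))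
      atTop (𝓝 (2 * Complex.sin ((π : ℂ) * z))) := h1.const_mul 2
  have hQ : Tendsto (fun n : ℕ => ∏ k ∈ Finset.range n, (1 - 4 * z ^ 2 / (2 * (k : ℂ) + 1) ^ 2))
      atTop (𝓝 (Complex.sin ((π : ℂ) * (2 * z)) / (2 * Complex.sin ((π : ℂ) * z)))) := by
    have hne2 : (2 : ℂ) * Complex.sin ((π : ℂ) * z) ≠ 0 := mul_ne_zero two_ne_zero hsin_ne
    have := h2''.div hden hne2
    refine this.congr fun n => ?_
    have hne3 : (2 : ℂ) * ((π : ℂ) * z * ∏ j ∈ Finset.range n, (1 - z ^ 2 / ((j : ℂ) + 1) ^ 2)) ≠ 0 :=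
      mul_ne_zero two_ne_zero (hp_ne n)
    rw [Pi.div_apply]
    exact mul_div_cancel_left₀ _ hne3
  -- the limit is cosh t
  have hval : Complex.sin ((π : ℂ) * (2 * z)) / (2 * Complex.sin ((π : ℂ) * z))
      = ((Real.cosh t : ℝ) : ℂ) := by
    have h2z : (π : ℂ) * (2 * z) = ((2 * t : ℝ) : ℂ) * Complex.I := by
      push_cast; rw [mul_comm ((π:ℂ)) (2*z), mul_assoc, mul_comm z ((π:ℂ)), hpz]; ring
    rw [h2z, hpz, Complex.sin_mul_I, Complex.sin_mul_I]
    rw [← Complex.ofReal_sinh, ← Complex.ofReal_sinh]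
    have hs2 : Real.sinh (2 * t) = 2 * Real.sinh t * Real.cosh t := Real.sinh_two_mul t
    rw [hs2]
    have hsne : ((Real.sinh t : ℝ) : ℂ) ≠ 0 := by exact_mod_cast Real.sinh_ne_zero.mpr ht
    rw [div_eq_iff (mul_ne_zero two_ne_zero (mul_ne_zero hsne Complex.I_ne_zero))]
    push_cast
    ring
  rw [hval] at hQ
  -- identify with the real product
  have hreal : ∀ n : ℕ,
      ((∏ k ∈ Finset.range n, (1 + 4 * t ^ 2 / (π ^ 2 * (2 * (k : ℝ) + 1) ^ 2)) : ℝ) : ℂ)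
        = ∏ k ∈ Finset.range n, (1 - 4 * z ^ 2 / (2 * (k : ℂ) + 1) ^ 2) := by
    intro n
    rw [Complex.ofReal_prod]
    refine Finset.prod_congr rfl fun k _ => ?_
    rw [hz2]
    push_cast
    field_simp
    ring
  have hQ' : Tendsto (fun n : ℕ =>
      ((∏ k ∈ Finset.range n, (1 + 4 * t ^ 2 / (π ^ 2 * (2 * (k : ℝ) + 1) ^ 2)) : ℝ) : ℂ))
      atTop (𝓝 ((Real.cosh t : ℝ) : ℂ)) := by
    refine hQ.congr fun n => (hreal n).symm
  have hfin := (Complex.continuous_re.tendsto _).comp hQ'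
  rw [Complex.ofReal_re] at hfin
  exact hfin.congr fun n => Complex.ofReal_re _

lemma summable_log (t : ℝ) :
    Summable (fun k : ℕ => Real.log (1 + 4 * t ^ 2 / (π ^ 2 * (2 * (k : ℝ) + 1) ^ 2))) := by
  have hπ := Real.pi_pos
  refine Summable.of_nonneg_of_le
    (fun k => Real.log_nonneg (by
      have : (0:ℝ) ≤ 4 * t ^ 2 / (π ^ 2 * (2 * (k : ℝ) + 1) ^ 2) := by positivity
      linarith))
    (fun k => ?_) (summable_osq.mul_left (4 * t ^ 2 / π ^ 2))
  have hm := m_pos k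
  have hpos : (0:ℝ) < 1 + 4 * t ^ 2 / (π ^ 2 * (2 * (k : ℝ) + 1) ^ 2) := by positivity
  have h1 := Real.log_le_sub_one_of_pos hpos
  have h2 : (1 + 4 * t ^ 2 / (π ^ 2 * (2 * (k : ℝ) + 1) ^ 2)) - 1
      = 4 * t ^ 2 / π ^ 2 * (1 / (2 * (k : ℝ) + 1) ^ 2) := by
    field_simp
    ring
  linarith [h1, h2.ge, h2.le]

lemma hasSum_log (t : ℝ) :
    HasSum (fun k : ℕ => Real.log (1 + 4 * t ^ 2 / (π ^ 2 * (2 * (k : ℝ) + 1) ^ 2)))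
      (Real.log (Real.cosh t)) := by
  have hπ := Real.pi_pos
  have hs := summable_log t
  have hlogprod : Tendsto (fun n : ℕ => ∑ k ∈ Finset.range n,
      Real.log (1 + 4 * t ^ 2 / (π ^ 2 * (2 * (k : ℝ) + 1) ^ 2)))
      atTop (𝓝 (Real.log (Real.cosh t))) := by
    have hcont := ((Real.continuousAt_log (Real.cosh_pos t).ne').tendsto).comp (cosh_prod t)
    refine hcont.congr fun n => ?_
    exact Real.log_prod fun k _ => by positivity
  have h2 := hs.hasSum
  have h3 := h2.tendsto_sum_nat
  have heq := tendsto_nhds_unique h3 hlogprod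
  rwa [heq] at h2

lemma hasSum_Phi (q : ℝ) : HasSum (fun k => Phi k q) (GG q) := by
  have hπ := Real.pi_pos
  have hlog := hasSum_log (2 * q / π)
  have hlog' : HasSum (fun k : ℕ =>
      Real.log (1 + 16 * q ^ 2 / (π ^ 4 * (2 * (k : ℝ) + 1) ^ 2)))
      (Real.log (Real.cosh (2 * q / π))) := by
    refine hlog.congr_fun fun k => ?_
    have hm := m_pos k
    congr 2
    field_simp
    ring
  have hsq : HasSum (fun k : ℕ => 4 * q ^ 2 / (π ^ 2 * (2 * (k : ℝ) + 1) ^ 2)) (q ^ 2 / 2) := by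
    have h := hasSum_osq.mul_left (4 * q ^ 2 / π ^ 2)
    have hv : (4 * q ^ 2 / π ^ 2) * (π ^ 2 / 8) = q ^ 2 / 2 := by
      field_simp; ring
    rw [hv] at h
    refine h.congr_fun fun k => ?_
    have hm := m_pos k
    field_simp
  exact hsq.sub (hlog'.mul_left (π ^ 2 / 4))

lemma hasDerivAt_Phi (k : ℕ) (q : ℝ) : HasDerivAt (Phi k) (q ^ 3 * psiF k q) q := by
  have hπ := Real.pi_pos
  have hm := m_pos k
  have hden : (0:ℝ) < 1 + 16 * q ^ 2 / (π ^ 4 * (2 * (k : ℝ) + 1) ^ 2) := by positivity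
  have hinner : HasDerivAt
      (fun x : ℝ => 1 + 16 * x ^ 2 / (π ^ 4 * (2 * (k : ℝ) + 1) ^ 2))
      (16 * (2 * q ^ 1) / (π ^ 4 * (2 * (k : ℝ) + 1) ^ 2)) q :=
    (((hasDerivAt_pow 2 q).const_mul 16).div_const _).const_add 1
  have hlog := (hinner.log hden.ne').const_mul (π ^ 2 / 4)
  have h1 : HasDerivAt (fun x : ℝ => 4 * x ^ 2 / (π ^ 2 * (2 * (k : ℝ) + 1) ^ 2))
      (4 * (2 * q ^ 1) / (π ^ 2 * (2 * (k : ℝ) + 1) ^ 2)) q :=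
    ((hasDerivAt_pow 2 q).const_mul 4).div_const _
  have htot := h1.sub hlog
  convert htot using 1
  · rfl
  · rfl
  · rfl
  unfold psiF
  have h1 : (0:ℝ) < π ^ 4 * (2 * (k:ℝ) + 1) ^ 2 + 16 * q ^ 2 := by positivity
  field_simp
  ring

lemma hasDerivAt_GG (q : ℝ) : HasDerivAt GG (fF q) q := by
  have hπ := Real.pi_pos
  have hu : HasDerivAt (fun x : ℝ => 2 * x / π) (2 / π) q := by
    simpa using ((hasDerivAt_id q).const_mul 2).div_const π
  have hcosh := hu.cosh
  have hlog := (hcosh.log (Real.cosh_pos _).ne').const_mul (π ^ 2 / 4)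
  have h1 : HasDerivAt (fun x : ℝ => x ^ 2 / 2) (2 * q ^ 1 / 2) q :=
    (hasDerivAt_pow 2 q).div_const 2
  have htot := h1.sub hlog
  convert htot using 1
  · rfl
  · rfl
  · rfl
  unfold fF
  have hch := (Real.cosh_pos (2 * q / π)).ne'
  field_simp
  ring

lemma fF_cont : Continuous fF := by
  apply continuous_id.sub
  apply Continuous.mul continuous_const
  apply Continuous.div (by continuity) (by continuity)
  exact fun q => (Real.cosh_pos _).ne'

lemma summable_C : Summable (fun k : ℕ => 128 / (π ^ 6 * (2 * (k : ℝ) + 1) ^ 4)) := by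
  have hπ := Real.pi_pos
  have : ∀ k : ℕ, 128 / (π ^ 6 * (2 * (k : ℝ) + 1) ^ 4)
      = (128 / π ^ 6) * (1 / (2 * (k : ℝ) + 1) ^ 4) := by
    intro k; field_simp
  rw [funext this]
  refine (Summable.mul_left _ ?_)
  refine Summable.of_nonneg_of_le (fun n => by positivity) (fun n => ?_) summable_osq
  have h1 : (1:ℝ) ≤ (2 * (n : ℝ) + 1) ^ 2 := by nlinarith [m_pos n]
  rw [div_le_div_iff₀ (by positivity) (by positivity)]
  nlinarith [m_pos n]

lemma summable_psiF (q : ℝ) : Summable (fun k => psiF k q) :=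
  Summable.of_nonneg_of_le (fun k => psiF_nonneg k q) (fun k => psiF_le k q) summable_C

lemma hh_cont : Continuous hh := by
  refine continuous_tsum (fun k => psiF_cont k) summable_C (fun k q => ?_)
  rw [Real.norm_eq_abs, abs_of_nonneg (psiF_nonneg k q)]
  exact psiF_le k q

lemma hh_nonneg (q : ℝ) : 0 ≤ hh q :=
  tsum_nonneg (fun k => psiF_nonneg k q)

lemma int_Phi (k : ℕ) (q : ℝ) : ∫ s in (0:ℝ)..q, s ^ 3 * psiF k s = Phi k q := by
  have h := intervalIntegral.integral_eq_sub_of_hasDerivAt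
    (f := Phi k) (f' := fun s => s ^ 3 * psiF k s)
    (fun s _ => hasDerivAt_Phi k s)
    (((continuous_pow 3).mul (psiF_cont k)).intervalIntegrable 0 q)
  rw [h]
  simp [Phi]

lemma int_fF (q : ℝ) : ∫ s in (0:ℝ)..q, fF s = GG q := by
  have h := intervalIntegral.integral_eq_sub_of_hasDerivAt
    (f := GG) (f' := fF) (fun s _ => hasDerivAt_GG s)
    (fF_cont.intervalIntegrable 0 q)
  rw [h]
  simp [GG]

lemma int_hh (q : ℝ) (hq : 0 < q) : ∫ s in (0:ℝ)..q, s ^ 3 * hh s = GG q := by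
  have hπ := Real.pi_pos
  rw [intervalIntegral.integral_of_le hq.le]
  have hfun : ∀ s : ℝ, s ^ 3 * hh s = ∑' k, s ^ 3 * psiF k s := by
    intro s
    rw [hh, ← tsum_mul_left]
  simp_rw [hfun]
  rw [MeasureTheory.integral_tsum
    (f := fun k s => s ^ 3 * psiF k s)
    (fun k => (((continuous_pow 3).mul (psiF_cont k)).aestronglyMeasurable).restrict) ?fin]
  case fin =>
    have hb : ∀ k : ℕ, (∫⁻ s in Set.Ioc (0:ℝ) q, ‖s ^ 3 * psiF k s‖₊)
        ≤ ENNReal.ofReal (q ^ 4 * (128 / (π ^ 6 * (2 * (k : ℝ) + 1) ^ 4))) := by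
      intro k
      have hm := m_pos k
      have hpt : ∀ s ∈ Set.Ioc (0:ℝ) q, ‖s ^ 3 * psiF k s‖ₑ
          ≤ ENNReal.ofReal (q ^ 3 * (128 / (π ^ 6 * (2 * (k : ℝ) + 1) ^ 4))) := by
        intro s hs
        rw [Real.enorm_eq_ofReal (mul_nonneg (pow_nonneg hs.1.le 3) (psiF_nonneg k s))]
        apply ENNReal.ofReal_le_ofReal
        exact mul_le_mul (pow_le_pow_left₀ hs.1.le hs.2 3) (psiF_le k s)
          (psiF_nonneg k s) (by positivity)
      calc (∫⁻ s in Set.Ioc (0:ℝ) q, ‖s ^ 3 * psiF k s‖₊)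
          ≤ ∫⁻ _ in Set.Ioc (0:ℝ) q,
              ENNReal.ofReal (q ^ 3 * (128 / (π ^ 6 * (2 * (k : ℝ) + 1) ^ 4))) :=
            MeasureTheory.setLIntegral_mono measurable_const hpt
        _ = ENNReal.ofReal (q ^ 3 * (128 / (π ^ 6 * (2 * (k : ℝ) + 1) ^ 4)))
              * volume (Set.Ioc (0:ℝ) q) := MeasureTheory.setLIntegral_const _ _
        _ = ENNReal.ofReal (q ^ 4 * (128 / (π ^ 6 * (2 * (k : ℝ) + 1) ^ 4))) := by
            rw [Real.volume_Ioc, ← ENNReal.ofReal_mul (by positivity)]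
            congr 1
            ring
    refine ne_top_of_le_ne_top ?_ (ENNReal.tsum_le_tsum hb)
    rw [← ENNReal.ofReal_tsum_of_nonneg (fun k => by positivity)
      (summable_C.mul_left (q ^ 4))]
    exact ENNReal.ofReal_ne_top
  have hterm : ∀ k : ℕ, (∫ s in Set.Ioc (0:ℝ) q, s ^ 3 * psiF k s) = Phi k q := by
    intro k
    rw [← intervalIntegral.integral_of_le hq.le]
    exact int_Phi k q
  simp_rw [hterm]
  exact (hasSum_Phi q).tsum_eq

lemma fF_eq (q : ℝ) (hq : 0 < q) : fF q = q ^ 3 * hh q := by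
  have h₁ : HasDerivAt (fun r => ∫ s in (0:ℝ)..r, fF s) (fF q) q :=
    intervalIntegral.integral_hasDerivAt_right (fF_cont.intervalIntegrable 0 q)
      (fF_cont.stronglyMeasurableAtFilter _ _) fF_cont.continuousAt
  have hc : Continuous (fun s : ℝ => s ^ 3 * hh s) := (continuous_pow 3).mul hh_cont
  have h₂ : HasDerivAt (fun r => ∫ s in (0:ℝ)..r, s ^ 3 * hh s) (q ^ 3 * hh q) q :=
    intervalIntegral.integral_hasDerivAt_right (hc.intervalIntegrable 0 q)
      (hc.stronglyMeasurableAtFilter _ _) hc.continuousAt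
  have hE : (fun r => ∫ s in (0:ℝ)..r, fF s) =ᶠ[𝓝 q]
      (fun r => ∫ s in (0:ℝ)..r, s ^ 3 * hh s) := by
    filter_upwards [isOpen_Ioi.mem_nhds hq] with r hr
    rw [int_fF r, int_hh r hr]
  exact (h₁.congr_of_eventuallyEq hE.symm).unique h₂

lemma psiF_hasDeriv (k : ℕ) (q : ℝ) :
    HasDerivAt (fun q => 32 / (π ^ 4 * (2 * (k : ℝ) + 1) ^ 3)
      * Real.arctan (4 * q / (π ^ 2 * (2 * (k : ℝ) + 1)))) (psiF k q) q := by
  have hπ := Real.pi_pos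
  have hm := m_pos k
  have hlin : HasDerivAt (fun x : ℝ => 4 * x / (π ^ 2 * (2 * (k : ℝ) + 1)))
      (4 / (π ^ 2 * (2 * (k : ℝ) + 1))) q := by
    simpa using ((hasDerivAt_id q).const_mul 4).div_const (π ^ 2 * (2 * (k : ℝ) + 1))
  have harc := (hlin.arctan).const_mul (32 / (π ^ 4 * (2 * (k : ℝ) + 1) ^ 3))
  convert harc using 1
  · rfl
  · rfl
  unfold psiF
  have h1 : (0:ℝ) < 1 + (4 * q / (π ^ 2 * (2 * (k : ℝ) + 1))) ^ 2 := by positivity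
  field_simp
  ring

lemma psiF_tendsto (k : ℕ) :
    Tendsto (fun q => 32 / (π ^ 4 * (2 * (k : ℝ) + 1) ^ 3)
        * Real.arctan (4 * q / (π ^ 2 * (2 * (k : ℝ) + 1))))
      atTop (𝓝 (16 / (π ^ 3 * (2 * (k : ℝ) + 1) ^ 3))) := by
  have hπ := Real.pi_pos
  have hm := m_pos k
  have hlin : Tendsto (fun q : ℝ => 4 * q / (π ^ 2 * (2 * (k : ℝ) + 1))) atTop atTop := by
    apply Tendsto.atTop_div_const (by positivity)
    exact Filter.tendsto_id.const_mul_atTop (by norm_num)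
  have harc : Tendsto (fun q : ℝ => Real.arctan (4 * q / (π ^ 2 * (2 * (k : ℝ) + 1))))
      atTop (𝓝 (π / 2)) :=
    (tendsto_nhds_of_tendsto_nhdsWithin Real.tendsto_arctan_atTop).comp hlin
  have := harc.const_mul (32 / (π ^ 4 * (2 * (k : ℝ) + 1) ^ 3))
  convert this using 2
  field_simp
  ring

lemma psiF_intOn (k : ℕ) : IntegrableOn (psiF k) (Set.Ioi 0) := by
  apply integrableOn_Ioi_deriv_of_nonneg
    ((psiF_hasDeriv k 0).continuousAt.continuousWithinAt)
    (fun x _ => psiF_hasDeriv k x) (fun x _ => psiF_nonneg k x) (psiF_tendsto k)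

lemma psiF_integral (k : ℕ) :
    ∫ q in Set.Ioi (0:ℝ), psiF k q = 16 / (π ^ 3 * (2 * (k : ℝ) + 1) ^ 3) := by
  have h := integral_Ioi_of_hasDerivAt_of_nonneg
    ((psiF_hasDeriv k 0).continuousAt.continuousWithinAt)
    (fun x _ => psiF_hasDeriv k x) (fun x _ => psiF_nonneg k x) (psiF_tendsto k)
  rw [h]
  simp

lemma hasSum_int :
    HasSum (fun k : ℕ => 16 / (π ^ 3 * (2 * (k : ℝ) + 1) ^ 3)) (14 * zeta3 / π ^ 3) := by
  have hπ := Real.pi_ne_zero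
  have h := hasSum_ocube.mul_left (16 / π ^ 3)
  have h2 : (16 / π ^ 3) * (7 / 8 * zeta3) = 14 * zeta3 / π ^ 3 := by ring
  rw [h2] at h
  refine h.congr_fun fun k => ?_
  field_simp

lemma lint_psiF (k : ℕ) :
    ∫⁻ q in Set.Ioi (0:ℝ), ‖psiF k q‖₊
      = ENNReal.ofReal (16 / (π ^ 3 * (2 * (k : ℝ) + 1) ^ 3)) := by
  have hfun : (∫⁻ q in Set.Ioi (0:ℝ), ‖psiF k q‖₊)
      = ∫⁻ q in Set.Ioi (0:ℝ), ENNReal.ofReal (psiF k q) :=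
    lintegral_congr fun q => Real.enorm_eq_ofReal (psiF_nonneg k q)
  rw [hfun, ← ofReal_integral_eq_lintegral_ofReal (psiF_intOn k)
      (Filter.Eventually.of_forall fun q => psiF_nonneg k q), psiF_integral]

lemma lint_sum_ne_top :
    ∑' k : ℕ, ∫⁻ q in Set.Ioi (0:ℝ), ‖psiF k q‖₊ ≠ ⊤ := by
  have hπ := Real.pi_pos
  simp_rw [lint_psiF]
  rw [← ENNReal.ofReal_tsum_of_nonneg (fun k => by positivity) hasSum_int.summable]
  exact ENNReal.ofReal_ne_top

lemma hh_integral : ∫ q in Set.Ioi (0:ℝ), hh q = 14 * zeta3 / π ^ 3 := by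
  have h := integral_tsum
    (fun k : ℕ => ((psiF_cont k).aestronglyMeasurable).restrict)
    lint_sum_ne_top
  rw [show (fun q => hh q) = fun q => ∑' k, psiF k q from rfl]
  rw [h]
  simp_rw [psiF_integral]
  exact hasSum_int.tsum_eq

lemma hh_intOn : IntegrableOn hh (Set.Ioi 0) := by
  constructor
  · exact hh_cont.aestronglyMeasurable.restrict
  · rw [HasFiniteIntegral]
    have hpt : ∀ q : ℝ, ‖hh q‖ₑ = ∑' k, ENNReal.ofReal (psiF k q) := by
      intro q
      rw [Real.enorm_eq_ofReal (hh_nonneg q)]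
      exact ENNReal.ofReal_tsum_of_nonneg (fun k => psiF_nonneg k q) (summable_psiF q)
    simp_rw [hpt]
    rw [lintegral_tsum (fun k =>
      ((psiF_cont k).measurable.ennreal_ofReal.aemeasurable))]
    have : ∀ k : ℕ, ∫⁻ q in Set.Ioi (0:ℝ), ENNReal.ofReal (psiF k q)
        = ENNReal.ofReal (16 / (π ^ 3 * (2 * (k : ℝ) + 1) ^ 3)) := by
      intro k
      rw [← lint_psiF k]
      congr 1
      exact funext fun q => (Real.enorm_eq_ofReal (psiF_nonneg k q)).symm
    simp_rw [this]
    rw [← ENNReal.ofReal_tsum_of_nonneg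
      (fun k => by have := Real.pi_pos; positivity) hasSum_int.summable]
    exact ENNReal.ofReal_lt_top

lemma eqOn : Set.EqOn hh
    (fun q : ℝ => q ^ (-3 : ℤ) *
      (Real.pi / (1 + Real.exp (4 * q / Real.pi)) - Real.pi / 2 + q)) (Set.Ioi 0) := by
  intro q hq
  have hq' : (0:ℝ) < q := hq
  have hX : Real.pi / (1 + Real.exp (4 * q / Real.pi)) - Real.pi / 2 + q = fF q := by
    have hπ := Real.pi_pos
    have hu : Real.exp (4 * q / π) = Real.exp (2 * q / π) * Real.exp (2 * q / π) := by
      rw [← Real.exp_add]; ring_nf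
    have he : (0:ℝ) < Real.exp (2 * q / π) := Real.exp_pos _
    have h1E : (0:ℝ) < 1 + Real.exp (2 * q / π) * Real.exp (2 * q / π) := by positivity
    have hch := (Real.cosh_pos (2 * q / π)).ne'
    unfold fF
    rw [Real.sinh_eq, Real.cosh_eq, Real.exp_neg, hu]
    field_simp
    ring
  show hh q = q ^ (-3 : ℤ) * (Real.pi / (1 + Real.exp (4 * q / Real.pi)) - Real.pi / 2 + q)
  rw [hX, fF_eq q hq']
  have hq3 : (q:ℝ) ^ 3 ≠ 0 := pow_ne_zero _ hq'.ne'
  have h3 : (q:ℝ) ^ (-3 : ℤ) = (q ^ 3)⁻¹ := by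
    rw [zpow_neg, show (3:ℤ) = ((3:ℕ):ℤ) from rfl, zpow_natCast]
  rw [h3]
  field_simp

end IV0

/-- The improper integral `(4/π) ∫₀^∞ q⁻³ [π/(1 + e^{4q/π}) − π/2 + q] dq` converges and
equals `56 ζ(3)/π⁴`. -/
theorem integral_v0_plus :
    IntegrableOn
      (fun q : ℝ => q ^ (-3 : ℤ) *
        (Real.pi / (1 + Real.exp (4 * q / Real.pi)) - Real.pi / 2 + q)) (Set.Ioi 0) ∧
    (4 / Real.pi) * ∫ q in Set.Ioi (0 : ℝ),
        q ^ (-3 : ℤ) * (Real.pi / (1 + Real.exp (4 * q / Real.pi)) - Real.pi / 2 + q)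
      = 56 * zeta3 / Real.pi ^ 4 := by
  have hπ := Real.pi_ne_zero
  constructor
  · exact IV0.hh_intOn.congr_fun IV0.eqOn measurableSet_Ioi
  · rw [← MeasureTheory.setIntegral_congr_fun measurableSet_Ioi IV0.eqOn,
      IV0.hh_integral]
    field_simp
    ring
end

section
/- The improper integral (4/π) ∫₀^∞ q^{-3} [π/2 − q − arccot(q)] dq converges and equals −1. -/
open MeasureTheory Real

/-- `arccot q = arctan (1/q)` for `q > 0`. -/
noncomputable def arccot (q : ℝ) : ℝ := Real.arctan (1 / q)

open Filter Topology
lemma arctan_le_self' {x : ℝ} (hx : 0 ≤ x) : Real.arctan x ≤ x := by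
  have hmono : Monotone (fun x : ℝ => x - Real.arctan x) := by
    apply monotone_of_deriv_nonneg
    · exact differentiable_id.sub Real.differentiable_arctan
    · intro y
      have h : HasDerivAt (fun x : ℝ => x - Real.arctan x) (1 - 1 / (1 + y ^ 2)) y :=
        (hasDerivAt_id y).sub (Real.hasDerivAt_arctan y)
      rw [h.deriv]
      have h1 : (1 : ℝ) ≤ 1 + y ^ 2 := by nlinarith [sq_nonneg y]
      have := div_le_one_of_le₀ h1 (by positivity : (0:ℝ) ≤ 1 + y^2)
      linarith
  have := hmono hx
  simp only [Real.arctan_zero, sub_zero] at this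
  linarith

lemma self_sub_le_arctan {x : ℝ} (hx : 0 ≤ x) : x - x ^ 3 / 3 ≤ Real.arctan x := by
  have hmono : Monotone (fun x : ℝ => Real.arctan x - x + x ^ 3 / 3) := by
    apply monotone_of_deriv_nonneg
    · exact (Real.differentiable_arctan.sub differentiable_id).add (by fun_prop)
    · intro y
      have h3 : HasDerivAt (fun x : ℝ => Real.arctan x - x + x ^ 3 / 3)
          (1 / (1 + y ^ 2) - 1 + 3 * y ^ 2 / 3) y :=
        ((Real.hasDerivAt_arctan y).sub (hasDerivAt_id y)).add
          ((hasDerivAt_pow 3 y).div_const 3)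
      rw [h3.deriv]
      have hp : (0:ℝ) < 1 + y ^ 2 := by positivity
      have key : 1 / (1 + y ^ 2) - 1 + 3 * y ^ 2 / 3 = y ^ 4 / (1 + y ^ 2) := by
        field_simp; ring
      rw [key]; positivity
  have := hmono hx
  simp only [Real.arctan_zero, zero_sub, zero_pow, ne_eq] at this
  norm_num at this
  linarith

noncomputable def Gfun (q : ℝ) : ℝ := (q - Real.arctan q) / (2 * q ^ 2) - Real.arctan q / 2

lemma Gfun_zero : Gfun 0 = 0 := by simp [Gfun]

lemma Gfun_hasDerivAt {x : ℝ} (hx : 0 < x) :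
    HasDerivAt Gfun ((Real.arctan x - x) / x ^ 3) x := by
  have hne : (2 : ℝ) * x ^ 2 ≠ 0 := by positivity
  have h1 : HasDerivAt (fun q : ℝ => q - Real.arctan q) (1 - 1 / (1 + x ^ 2)) x :=
    (hasDerivAt_id x).sub (Real.hasDerivAt_arctan x)
  have h2 : HasDerivAt (fun q : ℝ => 2 * q ^ 2) (2 * (2 * x)) x := by
    simpa using ((hasDerivAt_pow 2 x).const_mul 2)
  have h3 := (h1.div h2 hne).sub ((Real.hasDerivAt_arctan x).div_const 2)
  refine h3.congr_deriv ?_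
  have hp : (0:ℝ) < 1 + x ^ 2 := by positivity
  field_simp
  ring

lemma Gfun_tendsto_atTop : Tendsto Gfun atTop (𝓝 (-(Real.pi / 4))) := by
  have hA : Tendsto (fun x : ℝ => (x - Real.arctan x) / (2 * x ^ 2)) atTop (𝓝 0) := by
    apply squeeze_zero' (g := fun x : ℝ => 1 / (2 * x))
    · filter_upwards [eventually_gt_atTop (0:ℝ)] with x hx
      have := arctan_le_self' hx.le
      exact div_nonneg (by linarith) (by positivity)
    · filter_upwards [eventually_gt_atTop (0:ℝ)] with x hx
      have h1 : (0:ℝ) ≤ Real.arctan x := by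
        rw [← Real.arctan_zero]; exact Real.arctan_strictMono.monotone hx.le
      rw [div_le_div_iff₀ (by positivity) (by positivity)]
      nlinarith
    · have h2 : Tendsto (fun x : ℝ => 2 * x) atTop atTop :=
        (tendsto_id (α := ℝ)).const_mul_atTop two_pos
      exact (tendsto_inv_atTop_zero.comp h2).congr (fun x => by simp [one_div])
  have hB : Tendsto (fun x : ℝ => Real.arctan x / 2) atTop (𝓝 (Real.pi / 2 / 2)) :=
    (Real.tendsto_arctan_atTop.mono_right nhdsWithin_le_nhds).div_const 2
  have := hA.sub hB
  simp only [zero_sub] at this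
  unfold Gfun
  convert this using 2
  ring

lemma Gfun_contWithinAt : ContinuousWithinAt Gfun (Set.Ici 0) 0 := by
  rw [ContinuousWithinAt, Gfun_zero]
  have hA : Tendsto (fun x : ℝ => (x - Real.arctan x) / (2 * x ^ 2)) (nhdsWithin 0 (Set.Ici 0)) (𝓝 0) := by
    apply squeeze_zero' (g := fun x : ℝ => x / 6)
    · filter_upwards [self_mem_nhdsWithin] with x (hx : 0 ≤ x)
      have := arctan_le_self' hx
      exact div_nonneg (by linarith) (by positivity)
    · filter_upwards [self_mem_nhdsWithin] with x (hx : 0 ≤ x)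
      rcases eq_or_lt_of_le hx with rfl | hx'
      · norm_num
      · rw [div_le_div_iff₀ (by positivity) (by norm_num)]
        have := self_sub_le_arctan hx
        nlinarith
    · have : Tendsto (fun x : ℝ => x / 6) (nhdsWithin 0 (Set.Ici 0)) (𝓝 (0 / 6)) :=
        (tendsto_id.mono_left nhdsWithin_le_nhds).div_const 6
      simpa using this
  have hB : Tendsto (fun x : ℝ => Real.arctan x / 2) (nhdsWithin 0 (Set.Ici 0)) (𝓝 (Real.arctan 0 / 2)) :=
    ((Real.continuous_arctan.tendsto 0).mono_left nhdsWithin_le_nhds).div_const 2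
  have := hA.sub hB
  unfold Gfun
  simpa [Gfun] using this

lemma integrand_eq {q : ℝ} (hq : 0 < q) :
    q ^ (-3 : ℤ) * (Real.pi / 2 - q - arccot q) = (Real.arctan q - q) / q ^ 3 := by
  rw [arccot, one_div, Real.arctan_inv_of_pos hq]
  rw [show (-3 : ℤ) = -(3:ℕ) by norm_num, zpow_neg, zpow_natCast]
  field_simp
  ring


/-- The improper integral `(4/π) ∫₀^∞ q⁻³ [π/2 − q − arccot q] dq` converges and equals `−1`. -/
theorem integral_J2 :
    IntegrableOn
      (fun q : ℝ => q ^ (-3 : ℤ) * (Real.pi / 2 - q - arccot q)) (Set.Ioi 0) ∧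
    (4 / Real.pi) * ∫ q in Set.Ioi (0 : ℝ),
        q ^ (-3 : ℤ) * (Real.pi / 2 - q - arccot q) = -1 := by

  have hderiv : ∀ x ∈ Set.Ioi (0:ℝ),
      HasDerivAt Gfun ((fun q : ℝ => (Real.arctan q - q) / q ^ 3) x) x :=
    fun x hx => Gfun_hasDerivAt hx
  have hneg : ∀ x ∈ Set.Ioi (0:ℝ), (fun q : ℝ => (Real.arctan q - q) / q ^ 3) x ≤ 0 := by
    intro x hx
    have hx' : (0:ℝ) < x := hx
    exact div_nonpos_of_nonpos_of_nonneg (by linarith [arctan_le_self' hx'.le])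
      (by positivity)
  have hint : IntegrableOn (fun q : ℝ => (Real.arctan q - q) / q ^ 3) (Set.Ioi 0) :=
    integrableOn_Ioi_deriv_of_nonpos Gfun_contWithinAt hderiv hneg Gfun_tendsto_atTop
  have hval : ∫ x in Set.Ioi (0:ℝ), (Real.arctan x - x) / x ^ 3
      = -(Real.pi/4) - Gfun 0 :=
    integral_Ioi_of_hasDerivAt_of_nonpos Gfun_contWithinAt hderiv hneg Gfun_tendsto_atTop
  have hcongr : Set.EqOn (fun q : ℝ => (Real.arctan q - q) / q ^ 3)
      (fun q : ℝ => q ^ (-3:ℤ) * (Real.pi/2 - q - arccot q)) (Set.Ioi 0) :=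
    fun q hq => (integrand_eq hq).symm
  refine ⟨hint.congr_fun hcongr measurableSet_Ioi, ?_⟩
  rw [setIntegral_congr_fun measurableSet_Ioi hcongr.symm, hval, Gfun_zero]
  field_simp
  ring
end

section
/- The integral ∫₀^∞ √ω · (1 − coth(√ω)) dω converges and equals −ζ(3). -/
open MeasureTheory Real

/-- `coth x = cosh x / sinh x`. -/
noncomputable def coth (x : ℝ) : ℝ := Real.cosh x / Real.sinh x

open Set

lemma exp2_sub_one_pos' {t : ℝ} (ht : 0 < t) : 0 < Real.exp (2 * t) - 1 := by
  have : (1 : ℝ) < Real.exp (2 * t) := by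
    rw [← Real.exp_zero]
    exact Real.exp_lt_exp.mpr (by linarith)
  linarith

lemma one_sub_coth_eq' {t : ℝ} (ht : 0 < t) :
    1 - coth t = -(2 / (Real.exp (2 * t) - 1)) := by
  have hs : Real.sinh t ≠ 0 := ne_of_gt (Real.sinh_pos_iff.mpr ht)
  have h1 : Real.exp t ≠ 0 := (Real.exp_pos t).ne'
  have h2 : Real.exp (2 * t) - 1 ≠ 0 := (exp2_sub_one_pos' ht).ne'
  have he : Real.exp (2 * t) = Real.exp t * Real.exp t := by
    rw [two_mul, Real.exp_add]
  have hsinh : Real.sinh t = (Real.exp t - (Real.exp t)⁻¹) / 2 := by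
    rw [Real.sinh_eq, Real.exp_neg]
  have hcosh : Real.cosh t = (Real.exp t + (Real.exp t)⁻¹) / 2 := by
    rw [Real.cosh_eq, Real.exp_neg]
  rw [coth, hcosh, hsinh]
  rw [he] at h2 ⊢
  have hs' : Real.exp t - (Real.exp t)⁻¹ ≠ 0 := by
    rw [hsinh] at hs
    intro h; apply hs; rw [h]; norm_num
  field_simp
  have h3 : Real.exp t ^ 2 - 1 ≠ 0 := by rw [sq]; exact h2
  field_simp
  ring

lemma hasSum_geo' {t : ℝ} (ht : 0 < t) :
    HasSum (fun n : ℕ => 2 * Real.exp (-(2 * ((n : ℝ) + 1)) * t))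
      (2 / (Real.exp (2 * t) - 1)) := by
  have hr0 : (0 : ℝ) ≤ Real.exp (-(2 * t)) := (Real.exp_pos _).le
  have hr1 : Real.exp (-(2 * t)) < 1 := by
    rw [← Real.exp_zero]
    exact Real.exp_lt_exp.mpr (by linarith)
  have h2 : Real.exp (2 * t) - 1 ≠ 0 := (exp2_sub_one_pos' ht).ne'
  have h := (hasSum_geometric_of_lt_one hr0 hr1).mul_left (2 * Real.exp (-(2 * t)))
  have hfun : (fun n : ℕ => 2 * Real.exp (-(2 * t)) * Real.exp (-(2 * t)) ^ n)
      = fun n : ℕ => 2 * Real.exp (-(2 * ((n : ℝ) + 1)) * t) := by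
    funext n
    rw [← Real.exp_nat_mul, mul_assoc, ← Real.exp_add]
    congr 2
    ring
  have hval : 2 * Real.exp (-(2 * t)) * (1 - Real.exp (-(2 * t)))⁻¹
      = 2 / (Real.exp (2 * t) - 1) := by
    have hez : Real.exp (2 * t) ≠ 0 := (Real.exp_pos _).ne'
    have h1r : 1 - (Real.exp (2 * t))⁻¹ ≠ 0 := by
      have : (Real.exp (2 * t))⁻¹ < 1 := by rw [← Real.exp_neg]; exact hr1
      intro hcon; rw [sub_eq_zero] at hcon; exact absurd hcon.symm this.ne
    rw [Real.exp_neg]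
    field_simp
  rw [hfun, hval] at h
  exact h

/-- the function after substitution -/
noncomputable def Fsub (t : ℝ) : ℝ := 2 * t ^ 2 * (1 - coth t)

lemma hasSum_Fsub {t : ℝ} (ht : 0 < t) :
    HasSum (fun n : ℕ => -(4 * t ^ 2 * Real.exp (-(2 * ((n : ℝ) + 1)) * t))) (Fsub t) := by
  have h := (hasSum_geo' ht).mul_left (-(2 * t ^ 2))
  have hfun : (fun n : ℕ => -(2 * t ^ 2) * (2 * Real.exp (-(2 * ((n : ℝ) + 1)) * t)))
      = fun n : ℕ => -(4 * t ^ 2 * Real.exp (-(2 * ((n : ℝ) + 1)) * t)) := by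
    funext n; ring
  have hval : -(2 * t ^ 2) * (2 / (Real.exp (2 * t) - 1)) = Fsub t := by
    simp only [Fsub, one_sub_coth_eq' ht]; ring
  rw [hfun, hval] at h
  exact h

lemma contOn_Fsub : ContinuousOn Fsub (Ioi (0 : ℝ)) := by
  have h : ContinuousOn (fun t : ℝ => Real.cosh t / Real.sinh t) (Ioi 0) := by
    apply ContinuousOn.div Real.continuous_cosh.continuousOn Real.continuous_sinh.continuousOn
    intro t ht
    exact ne_of_gt (Real.sinh_pos_iff.mpr ht)
  exact ((continuous_const.mul (continuous_pow 2)).continuousOn).mul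
    (continuousOn_const.sub h)

lemma normFsub_eq {t : ℝ} (ht : 0 < t) :
    ‖Fsub t‖ = 4 * t ^ 2 / (Real.exp (2 * t) - 1) := by
  have h2 := exp2_sub_one_pos' ht
  have : Fsub t = -(4 * t ^ 2 / (Real.exp (2 * t) - 1)) := by
    have hne : Real.exp (2 * t) - 1 ≠ 0 := h2.ne'
    simp only [Fsub, one_sub_coth_eq' ht]
    field_simp
    norm_num
  rw [this, Real.norm_eq_abs, abs_neg, abs_of_nonneg (by positivity)]

lemma integrableOn_G' :
    IntegrableOn (fun t : ℝ => 4 * t ^ 2 / (Real.exp (2 * t) - 1)) (Ioi (0 : ℝ)) := by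
  have hmeas : ContinuousOn (fun t : ℝ => 4 * t ^ 2 / (Real.exp (2 * t) - 1)) (Ioi 0) := by
    apply ContinuousOn.div
    · exact (continuous_const.mul (continuous_pow 2)).continuousOn
    · exact ((Real.continuous_exp.comp (continuous_const.mul continuous_id)).sub
        continuous_const).continuousOn
    · exact fun t ht => (exp2_sub_one_pos' ht).ne'
  have hsplit : Ioc (0:ℝ) 1 ∪ Ioi (1:ℝ) = Ioi 0 := Ioc_union_Ioi_eq_Ioi zero_le_one
  have h1 : IntegrableOn (fun t : ℝ => 4 * t ^ 2 / (Real.exp (2 * t) - 1)) (Ioc (0:ℝ) 1) := by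
    apply Integrable.mono' (integrable_const (2 : ℝ))
      ((hmeas.mono Ioc_subset_Ioi_self).aestronglyMeasurable measurableSet_Ioc)
    filter_upwards [ae_restrict_mem measurableSet_Ioc] with t ht
    obtain ⟨ht0, ht1⟩ := ht
    have h2 := exp2_sub_one_pos' ht0
    have hle : 2 * t ≤ Real.exp (2 * t) - 1 := by
      have := Real.add_one_le_exp (2 * t); linarith
    rw [Real.norm_eq_abs, abs_of_nonneg (by positivity)]
    calc 4 * t ^ 2 / (Real.exp (2 * t) - 1) ≤ 4 * t ^ 2 / (2 * t) := by
          apply div_le_div_of_nonneg_left (by positivity) (by positivity) hle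
      _ = 2 * t := by field_simp; ring
      _ ≤ 2 := by linarith
  have h2 : IntegrableOn (fun t : ℝ => 4 * t ^ 2 / (Real.exp (2 * t) - 1)) (Ioi (1:ℝ)) := by
    set d : ℝ := Real.exp (-2) with hd
    set C : ℝ := 4 / (1 - d) with hC
    have hE : d < 1 := by
      rw [hd, ← Real.exp_zero]; exact Real.exp_lt_exp.mpr (by norm_num)
    have hint : IntegrableOn (fun t : ℝ => C * (t ^ 2 * Real.exp (-2 * t))) (Ioi 1) := by
      have h0 : IntegrableOn (fun t : ℝ => t ^ (2:ℝ) * Real.exp (-2 * t ^ (1:ℝ))) (Ioi 0) :=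
        integrableOn_rpow_mul_exp_neg_mul_rpow (by norm_num) (by norm_num) (by norm_num)
      have h1 : IntegrableOn (fun t : ℝ => t ^ 2 * Real.exp (-2 * t)) (Ioi 0) := by
        apply h0.congr_fun _ measurableSet_Ioi
        intro t ht
        show t ^ (2:ℝ) * Real.exp (-2 * t ^ (1:ℝ)) = t ^ 2 * Real.exp (-2 * t)
        rw [Real.rpow_one, ← Real.rpow_natCast t 2]
        norm_num
      exact ((h1.mono_set (Ioi_subset_Ioi zero_le_one)).const_mul C)
    apply Integrable.mono' hint
      ((hmeas.mono (Ioi_subset_Ioi zero_le_one)).aestronglyMeasurable measurableSet_Ioi)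
    filter_upwards [ae_restrict_mem measurableSet_Ioi] with t ht
    have ht1 : (1:ℝ) < t := ht
    have ht0 : (0:ℝ) < t := lt_trans zero_lt_one ht1
    have h2 := exp2_sub_one_pos' ht0
    rw [Real.norm_eq_abs, abs_of_nonneg (by positivity)]
    have hden : Real.exp (2 * t) * (1 - d) ≤ Real.exp (2 * t) - 1 := by
      have key : 1 ≤ Real.exp (2 * t) * d := by
        rw [hd, ← Real.exp_add, ← Real.exp_zero]
        exact Real.exp_le_exp.mpr (by linarith)
      have := Real.exp_pos (2 * t)
      nlinarith
    have hdenpos : 0 < Real.exp (2 * t) * (1 - d) := by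
      have := Real.exp_pos (2 * t); nlinarith
    calc 4 * t ^ 2 / (Real.exp (2 * t) - 1)
        ≤ 4 * t ^ 2 / (Real.exp (2 * t) * (1 - d)) :=
          div_le_div_of_nonneg_left (by positivity) hdenpos hden
      _ = C * (t ^ 2 * Real.exp (-2 * t)) := by
          rw [show (-2 : ℝ) * t = -(2 * t) by ring, Real.exp_neg]
          have hA : Real.exp (2 * t) ≠ 0 := (Real.exp_pos _).ne'
          have hD : 1 - d ≠ 0 := by linarith
          rw [hC]
          field_simp
  exact (h1.union h2).mono_set hsplit.symm.subset

lemma integrableOn_Fsub : IntegrableOn Fsub (Ioi (0 : ℝ)) := by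
  apply Integrable.mono' integrableOn_G' (contOn_Fsub.aestronglyMeasurable measurableSet_Ioi)
  filter_upwards [ae_restrict_mem measurableSet_Ioi] with t ht
  rw [normFsub_eq ht]

lemma integral_f' (n : ℕ) :
    ∫ t in Ioi (0:ℝ), -(4 * t ^ 2 * Real.exp (-(2 * ((n : ℝ) + 1)) * t))
      = -(1 / ((n : ℝ) + 1) ^ 3) := by
  have hr : (0:ℝ) < 2 * ((n : ℝ) + 1) := by positivity
  have key := integral_rpow_mul_exp_neg_mul_Ioi (a := 3) (r := 2 * ((n : ℝ) + 1))
    (by norm_num) hr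
  have hgamma : Real.Gamma 3 = 2 := by
    rw [show (3:ℝ) = (2:ℕ) + 1 by norm_num, Real.Gamma_nat_eq_factorial]
    norm_num
  have h3 : ((1:ℝ) / (2 * ((n : ℝ) + 1))) ^ (3:ℝ) = ((1:ℝ) / (2 * ((n : ℝ) + 1))) ^ (3:ℕ) := by
    rw [← Real.rpow_natCast ((1:ℝ) / (2 * ((n : ℝ) + 1))) 3]
    norm_num
  rw [hgamma, h3] at key
  have key2 : ∫ t in Ioi (0:ℝ), t ^ 2 * Real.exp (-(2 * ((n : ℝ) + 1) * t))
      = ((1:ℝ) / (2 * ((n : ℝ) + 1))) ^ (3:ℕ) * 2 := by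
    rw [← key]
    apply setIntegral_congr_fun measurableSet_Ioi
    intro t ht
    show t ^ 2 * Real.exp (-(2 * ((n:ℝ) + 1) * t)) = t ^ ((3:ℝ) - 1) * Real.exp (-(2 * ((n:ℝ)+1) * t))
    rw [show (3:ℝ) - 1 = ((2:ℕ):ℝ) by norm_num, Real.rpow_natCast]
  calc ∫ t in Ioi (0:ℝ), -(4 * t ^ 2 * Real.exp (-(2 * ((n : ℝ) + 1)) * t))
      = ∫ t in Ioi (0:ℝ), (-4) * (t ^ 2 * Real.exp (-(2 * ((n : ℝ) + 1) * t))) := by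
        apply setIntegral_congr_fun measurableSet_Ioi
        intro t ht
        show -(4 * t ^ 2 * Real.exp (-(2 * ((n:ℝ) + 1)) * t))
          = (-4) * (t ^ 2 * Real.exp (-(2 * ((n:ℝ) + 1) * t)))
        rw [show -(2 * ((n:ℝ) + 1)) * t = -(2 * ((n:ℝ) + 1) * t) by ring]
        ring
    _ = (-4) * ∫ t in Ioi (0:ℝ), t ^ 2 * Real.exp (-(2 * ((n : ℝ) + 1) * t)) :=
        integral_const_mul _ _
    _ = -(1 / ((n : ℝ) + 1) ^ 3) := by
        rw [key2]
        have : ((n : ℝ) + 1) ≠ 0 := by positivity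
        field_simp
        ring

lemma hasSum_integrals' :
    HasSum (fun n : ℕ => -(1 / ((n : ℝ) + 1) ^ 3)) (∫ t in Ioi (0:ℝ), Fsub t) := by
  have hmeas : ∀ n : ℕ, AEStronglyMeasurable
      (fun t : ℝ => -(4 * t ^ 2 * Real.exp (-(2 * ((n : ℝ) + 1)) * t)))
      (volume.restrict (Ioi (0:ℝ))) := by
    intro n
    exact (((continuous_const.mul (continuous_pow 2)).mul
      (Real.continuous_exp.comp (continuous_const.mul continuous_id))).neg).aestronglyMeasurable
  have hDCT := hasSum_integral_of_dominated_convergence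
    (μ := volume.restrict (Ioi (0:ℝ)))
    (F := fun (n : ℕ) (t : ℝ) => -(4 * t ^ 2 * Real.exp (-(2 * ((n : ℝ) + 1)) * t)))
    (f := Fsub)
    (fun (n : ℕ) (t : ℝ) => 4 * t ^ 2 * Real.exp (-(2 * ((n : ℝ) + 1)) * t))
    hmeas
    (fun n => by
      filter_upwards with t
      rw [Real.norm_eq_abs, abs_neg, abs_of_nonneg (by positivity)])
    (by
      filter_upwards [ae_restrict_mem measurableSet_Ioi] with t ht
      exact (((hasSum_geo' ht).mul_left (2 * t ^ 2)).summable).congr fun n => by ring)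
    (by
      apply Integrable.congr integrableOn_G'
      filter_upwards [ae_restrict_mem measurableSet_Ioi] with t ht
      have h := (hasSum_geo' ht).mul_left (2 * t ^ 2)
      have hfun : (fun n : ℕ => 2 * t ^ 2 * (2 * Real.exp (-(2 * ((n : ℝ) + 1)) * t)))
          = fun n : ℕ => 4 * t ^ 2 * Real.exp (-(2 * ((n : ℝ) + 1)) * t) := by
        funext n; ring
      have hval : 2 * t ^ 2 * (2 / (Real.exp (2 * t) - 1))
          = 4 * t ^ 2 / (Real.exp (2 * t) - 1) := by
        field_simp; ring
      rw [hfun, hval] at h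
      exact h.tsum_eq.symm)
    (by
      filter_upwards [ae_restrict_mem measurableSet_Ioi] with t ht
      exact hasSum_Fsub ht)
  have heq : (fun n : ℕ => ∫ t in Ioi (0:ℝ), -(4 * t ^ 2 * Real.exp (-(2 * ((n : ℝ) + 1)) * t)))
      = fun n : ℕ => -(1 / ((n : ℝ) + 1) ^ 3) := by
    funext n; exact integral_f' n
  rwa [heq] at hDCT

lemma integral_Fsub : ∫ t in Ioi (0:ℝ), Fsub t = -zeta3 := by
  have h2 : HasSum (fun n : ℕ => 1 / ((n : ℝ) + 1) ^ 3) (-(∫ t in Ioi (0:ℝ), Fsub t)) := by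
    simpa using hasSum_integrals'.neg
  rw [zeta3, h2.tsum_eq]
  ring

lemma pointwise_eq' {x : ℝ} (hx : x ∈ Ioi (0:ℝ)) :
    (|1 / 2| * x ^ ((1:ℝ)/2 - 1)) • Fsub (x ^ ((1:ℝ)/2))
      = Real.sqrt x * (1 - coth (Real.sqrt x)) := by
  have hx0 : (0:ℝ) < x := hx
  have hs : Real.sqrt x = x ^ ((1:ℝ)/2) := Real.sqrt_eq_rpow x
  have hsq : (x ^ ((1:ℝ)/2)) ^ 2 = x := by
    rw [← Real.rpow_natCast (x ^ ((1:ℝ)/2)) 2, ← Real.rpow_mul hx0.le]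
    norm_num
  rw [smul_eq_mul, Fsub, hsq, ← hs]
  have hxm : x ^ ((1:ℝ)/2 - 1) = Real.sqrt x * x⁻¹ := by
    rw [hs, ← Real.rpow_neg_one x, ← Real.rpow_add hx0]
    norm_num
  rw [hxm]
  have hsp : (0:ℝ) < Real.sqrt x := Real.sqrt_pos.mpr hx0
  rw [abs_of_nonneg (by norm_num : (0:ℝ) ≤ 1/2)]
  field_simp

/-- `∫₀^∞ √ω (1 − coth √ω) dω` converges and equals `−ζ(3)`. -/
theorem integral_sqrt_one_sub_coth :
    IntegrableOn (fun ω : ℝ => Real.sqrt ω * (1 - coth (Real.sqrt ω))) (Set.Ioi 0) ∧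
    ∫ ω in Set.Ioi (0 : ℝ), Real.sqrt ω * (1 - coth (Real.sqrt ω)) = -zeta3 := by
  have hp : ((1:ℝ)/2) ≠ 0 := by norm_num
  constructor
  · have h := (integrableOn_Ioi_comp_rpow_iff Fsub hp).mpr integrableOn_Fsub
    apply h.congr_fun _ measurableSet_Ioi
    intro x hx
    exact pointwise_eq' hx
  · rw [← integral_Fsub, ← integral_comp_rpow_Ioi Fsub hp]
    apply setIntegral_congr_fun measurableSet_Ioi
    intro x hx
    exact (pointwise_eq' hx).symm
end

section
/- For every λ > 0, ∫₀^π∫₀^π π^{-2} (λ + 4sin²(q₁/2) + 4sin²(q₂/2))^{-1} dq₁dq₂ = (2/(π(λ+4))) · K(4/(λ+4)), where K is the complete elliptic integral of the first kind with modulus convention K(k) = ∫₀¹ dx/√((1−x²)(1−k²x²)). -/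
open MeasureTheory Real intervalIntegral

/-- The complete elliptic integral of the first kind,
`K(k) = ∫₀¹ dx/√((1−x²)(1−k²x²))`. -/
noncomputable def ellipticK (k : ℝ) : ℝ :=
  ∫ x in (0:ℝ)..1, 1 / Real.sqrt ((1 - x ^ 2) * (1 - k ^ 2 * x ^ 2))

set_option maxHeartbeats 1000000

lemma sin_half_sq (q : ℝ) : Real.sin (q/2)^2 = (1 - Real.cos q)/2 := by
  have h2 : 2*(q/2) = q := by ring
  rw [Real.sin_sq_eq_half_sub, h2]; ring

lemma stepA (a : ℝ) (ha : 0 < a) :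
    ∫ q in (0:ℝ)..Real.pi, (a + 4 * Real.sin (q/2)^2)⁻¹ = Real.pi / Real.sqrt (a*(a+4)) := by
  set u := Real.sqrt (a*(a+4)) with hu
  have hu2 : u^2 = a*(a+4) := Real.sq_sqrt (by positivity)
  have hu0 : 0 < u := Real.sqrt_pos.mpr (by positivity)
  have hua : a < u := by nlinarith
  set d : ℝ → ℝ := fun q => 2*a + (u-a)*(1-Real.cos q) with hdd
  have hd : ∀ q, 0 < d q := by
    intro q
    have := Real.cos_le_one q
    simp only [hdd]
    nlinarith
  set Φ : ℝ → ℝ := fun q => (q + 2*Real.arctan ((u-a)*Real.sin q / d q))/u with hΦ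
  have hderiv : ∀ q ∈ Set.uIcc (0:ℝ) Real.pi,
      HasDerivAt Φ ((a + 4 * Real.sin (q/2)^2)⁻¹) q := by
    intro q _
    have hN : HasDerivAt (fun q => (u-a)*Real.sin q) ((u-a)*Real.cos q) q :=
      (Real.hasDerivAt_sin q).const_mul _
    have hD : HasDerivAt d ((u-a)*Real.sin q) q := by
      have h1 : HasDerivAt (fun q => 1 - Real.cos q) (Real.sin q) q := by
        simpa using (Real.hasDerivAt_cos q).const_sub 1
      simpa [hdd] using (h1.const_mul (u-a)).const_add (2*a)
    have harc := (hN.div hD (ne_of_gt (hd q))).arctan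
    have hsum := ((hasDerivAt_id q).add (harc.const_mul 2)).div_const u
    refine hsum.congr_deriv ?_
    symm
    set s := Real.sin q with hs
    set c := Real.cos q with hc
    have hcs : s^2 = 1 - c^2 := by
      rw [hs, hc, Real.sin_sq]
    have hD2 : d q ^ 2 + ((u-a)*s)^2 = 4*a*(a + 2*(1-c)) := by
      simp only [hdd]
      linear_combination ((u-a)^2) * hcs + (2*(1-c)) * hu2
    have hNum : d q ^ 2 + ((u-a)*s)^2
        + 2*((u-a)*c * d q - (u-a)*s * ((u-a)*s)) = 4*a*u := by
      simp only [hdd]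
      linear_combination (-(u-a)^2) * hcs
    have hapos : 0 < a + 2*(1-c) := by
      have := Real.cos_le_one q; rw [hc]; nlinarith
    have hd0 := ne_of_gt (hd q)
    have hD2pos : 0 < d q ^2 + ((u-a)*s)^2 := by
      have h1 : 0 < d q ^ 2 := pow_pos (hd q) 2
      nlinarith [sq_nonneg ((u-a)*s)]
    have hX : (1:ℝ) + 2 * (1 / (1 + ((u-a)*s / d q)^2) * (((u-a)*c * d q - (u-a)*s * ((u-a)*s)) / d q ^ 2))
        = (d q ^2 + ((u-a)*s)^2 + 2*((u-a)*c * d q - (u-a)*s * ((u-a)*s))) / (d q ^2 + ((u-a)*s)^2) := by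
      field_simp
    simp only [Pi.div_apply, ← hs]
    rw [sin_half_sq]
    rw [show a + 4*((1-Real.cos q)/2) = a + 2*(1-c) from by rw [hc]; ring, hX, hNum, hD2]
    rw [div_div, eq_comm, div_eq_iff (ne_of_gt (by positivity : (0:ℝ) < 4*a*(a+2*(1-c))*u))]
    field_simp
  have hcont : Continuous fun q => (a + 4*Real.sin (q/2)^2)⁻¹ := by
    have h1 : Continuous fun q : ℝ => a + 4*Real.sin (q/2)^2 := by continuity
    exact h1.inv₀ (fun q => by positivity)
  rw [intervalIntegral.integral_eq_sub_of_hasDerivAt hderiv (hcont.intervalIntegrable 0 Real.pi)]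
  have h0 : Φ 0 = 0 := by simp [hΦ]
  have hπ : Φ Real.pi = Real.pi/u := by simp [hΦ]
  rw [hπ, h0, sub_zero]

lemma stepB (lam : ℝ) (hlam : 0 < lam) :
    ∫ q in (0:ℝ)..Real.pi,
      (Real.sqrt ((lam + 4*Real.sin (q/2)^2) * (lam + 4 + 4*Real.sin (q/2)^2)))⁻¹
      = (2/(lam+4)) * ellipticK (4/(lam+4)) := by
  set k : ℝ := 4/(lam+4) with hkdef
  have hl4 : (0:ℝ) < lam + 4 := by linarith
  have hk0 : 0 < k := by positivity
  have hk1 : k < 1 := by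
    rw [hkdef, div_lt_one hl4]; linarith
  have hlameq : lam = 4*(1-k)/k := by
    rw [hkdef]; field_simp; ring
  clear_value k
  have hHpos : ∀ q : ℝ, (0:ℝ) < 1 - k + k * Real.sin (q/2)^2 := by
    intro q
    nlinarith [sq_nonneg (Real.sin (q/2))]
  set g : ℝ → ℝ := fun q => Real.sin (q/2) / Real.sqrt (1 - k + k * Real.sin (q/2)^2) with hgdef
  set g' : ℝ → ℝ := fun q =>
    ((1-k)/2) * Real.cos (q/2) / ((1 - k + k * Real.sin (q/2)^2) * Real.sqrt (1 - k + k * Real.sin (q/2)^2)) with hg'def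
  have hg : ∀ q : ℝ, HasDerivAt g (g' q) q := by
    intro q
    have hhalf : HasDerivAt (fun q : ℝ => q/2) (1/2) q := (hasDerivAt_id q).div_const 2
    have hsin : HasDerivAt (fun q : ℝ => Real.sin (q/2)) (Real.cos (q/2) * (1/2)) q := hhalf.sin
    have hH : HasDerivAt (fun q : ℝ => 1 - k + k * Real.sin (q/2)^2)
        (k * ((2:ℕ) * Real.sin (q/2)^1 * (Real.cos (q/2) * (1/2)))) q := by
      exact ((hsin.pow 2).const_mul k).const_add (1-k)
    have hsq := hH.sqrt (ne_of_gt (hHpos q))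
    have hq := hsin.div hsq (ne_of_gt (Real.sqrt_pos.mpr (hHpos q)))
    refine hq.congr_deriv ?_
    symm
    set w := Real.sqrt (1 - k + k * Real.sin (q/2)^2) with hwdef
    have hw0 : 0 < w := Real.sqrt_pos.mpr (hHpos q)
    have hw2 : w^2 = 1 - k + k * Real.sin (q/2)^2 := Real.sq_sqrt (hHpos q).le
    rw [hg'def]
    simp only []
    rw [← hw2]
    field_simp
    rw [Real.sqrt_sq hw0.le]
    linear_combination (-2*Real.cos (q/2)*w) * hw2
  have hgcont : Continuous g := by
    have : Differentiable ℝ g := fun q => (hg q).differentiableAt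
    exact this.continuous
  have hg'pos : ∀ x ∈ Set.Ioo (0:ℝ) Real.pi, 0 < g' x := by
    intro x hx
    have hc : 0 < Real.cos (x/2) := by
      apply Real.cos_pos_of_mem_Ioo
      constructor
      · have := Real.pi_pos; linarith [hx.1]
      · linarith [hx.2]
    rw [hg'def]
    have h1 : 0 < (1-k)/2 * Real.cos (x/2) := by
      apply mul_pos (by linarith) hc
    exact div_pos h1 (mul_pos (hHpos x) (Real.sqrt_pos.mpr (hHpos x)))
  have hmono : StrictMonoOn g (Set.Icc 0 Real.pi) := by
    apply strictMonoOn_of_deriv_pos (convex_Icc 0 Real.pi) hgcont.continuousOn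
    intro x hx
    rw [interior_Icc] at hx
    rw [(hg x).deriv]
    exact hg'pos x hx
  have hg0 : g 0 = 0 := by
    simp [hgdef]
  have hg1 : g Real.pi = 1 := by
    rw [hgdef]
    simp only []
    have h1 : (1:ℝ) - k + k * Real.sin (Real.pi/2)^2 = 1 := by
      rw [Real.sin_pi_div_two]; ring
    rw [h1, Real.sin_pi_div_two, Real.sqrt_one]
    norm_num
  have himg : g '' Set.Ioo 0 Real.pi = Set.Ioo 0 1 := by
    apply subset_antisymm
    · rintro _ ⟨q, hq, rfl⟩
      constructor
      · have := hmono (Set.left_mem_Icc.mpr Real.pi_pos.le)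
          ⟨hq.1.le, hq.2.le⟩ hq.1
        rwa [hg0] at this
      · have := hmono ⟨hq.1.le, hq.2.le⟩ (Set.right_mem_Icc.mpr Real.pi_pos.le) hq.2
        rwa [hg1] at this
    · have := intermediate_value_Ioo Real.pi_pos.le hgcont.continuousOn
      rw [hg0, hg1] at this
      exact this
  have hinj : Set.InjOn g (Set.Ioo 0 Real.pi) :=
    (hmono.mono Set.Ioo_subset_Icc_self).injOn
  have key := integral_image_eq_integral_abs_deriv_smul measurableSet_Ioo
    (fun x _ => (hg x).hasDerivWithinAt) hinj
    (fun x => 1 / Real.sqrt ((1 - x ^ 2) * (1 - k ^ 2 * x ^ 2)))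
  rw [himg] at key
  have h4k : lam + 4 = 4/k := by
    rw [hkdef]; field_simp
  have hpt : Set.EqOn
      (fun q => |g' q| • ((fun x => 1 / Real.sqrt ((1 - x ^ 2) * (1 - k ^ 2 * x ^ 2))) (g q)))
      (fun q => ((lam+4)/2) * (Real.sqrt ((lam + 4*Real.sin (q/2)^2) * (lam + 4 + 4*Real.sin (q/2)^2)))⁻¹)
      (Set.Ioo 0 Real.pi) := by
    intro q hq
    simp only [smul_eq_mul]
    have hc : 0 < Real.cos (q/2) := by
      apply Real.cos_pos_of_mem_Ioo
      constructor
      · have := Real.pi_pos; linarith [hq.1]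
      · linarith [hq.2]
    have hH := hHpos q
    have hw0 : 0 < Real.sqrt (1-k+k*Real.sin (q/2)^2) := Real.sqrt_pos.mpr hH
    have hw2 : Real.sqrt (1-k+k*Real.sin (q/2)^2)^2 = 1-k+k*Real.sin (q/2)^2 := Real.sq_sqrt hH.le
    have hv0 : (0:ℝ) < 1 + k*Real.sin (q/2)^2 := by nlinarith [sq_nonneg (Real.sin (q/2))]
    have hvv0 : 0 < Real.sqrt (1+k*Real.sin (q/2)^2) := Real.sqrt_pos.mpr hv0
    have hv2 : Real.sqrt (1+k*Real.sin (q/2)^2)^2 = 1+k*Real.sin (q/2)^2 := Real.sq_sqrt hv0.le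
    have hc2 : Real.cos (q/2)^2 = 1 - Real.sin (q/2)^2 := Real.cos_sq' _
    have habs : |g' q| = g' q := abs_of_pos (hg'pos q hq)
    have e0 : g q = Real.sin (q/2) / Real.sqrt (1-k+k*Real.sin (q/2)^2) := by
      simp only [hgdef]
    have hin : (1 - (g q)^2) * (1 - k^2 * (g q)^2)
        = ((1-k) * Real.cos (q/2) * Real.sqrt (1+k*Real.sin (q/2)^2) / (1-k+k*Real.sin (q/2)^2))^2 := by
      rw [e0, div_pow, hw2, div_pow, mul_pow, mul_pow, hv2, hc2]
      rw [one_sub_div hH.ne', mul_div_assoc', one_sub_div hH.ne', div_mul_div_comm]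
      rw [div_eq_div_iff (mul_ne_zero hH.ne' hH.ne') (pow_ne_zero 2 hH.ne')]
      ring
    have hsqrtin : Real.sqrt ((1 - (g q)^2) * (1 - k^2 * (g q)^2))
        = (1-k) * Real.cos (q/2) * Real.sqrt (1+k*Real.sin (q/2)^2) / (1-k+k*Real.sin (q/2)^2) := by
      rw [hin]
      apply Real.sqrt_sq
      apply div_nonneg _ hH.le
      exact mul_nonneg (mul_nonneg (by linarith) hc.le) (Real.sqrt_nonneg _)
    have hPsq : (lam + 4*Real.sin (q/2)^2) * (lam + 4 + 4*Real.sin (q/2)^2)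
        = ((4/k) * (Real.sqrt (1-k+k*Real.sin (q/2)^2) * Real.sqrt (1+k*Real.sin (q/2)^2)))^2 := by
      rw [show ((4/k) * (Real.sqrt (1-k+k*Real.sin (q/2)^2) * Real.sqrt (1+k*Real.sin (q/2)^2)))^2
          = (4/k)^2 * (Real.sqrt (1-k+k*Real.sin (q/2)^2)^2 * Real.sqrt (1+k*Real.sin (q/2)^2)^2)
          from by rw [mul_pow, mul_pow], hw2, hv2, hlameq]
      field_simp
      ring
    have hP : Real.sqrt ((lam + 4*Real.sin (q/2)^2) * (lam + 4 + 4*Real.sin (q/2)^2))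
        = (4/k) * (Real.sqrt (1-k+k*Real.sin (q/2)^2) * Real.sqrt (1+k*Real.sin (q/2)^2)) := by
      rw [hPsq]
      apply Real.sqrt_sq
      exact mul_nonneg (div_nonneg (by norm_num) hk0.le)
        (mul_nonneg (Real.sqrt_nonneg _) (Real.sqrt_nonneg _))
    show |g' q| * (1 / Real.sqrt ((1 - (g q)^2) * (1 - k^2 * (g q)^2))) = _
    rw [habs, hsqrtin, hP, h4k]
    simp only [hg'def]
    have h1k : (1:ℝ) - k ≠ 0 := by linarith
    field_simp [hc.ne', hw0.ne', hvv0.ne', hH.ne', hk0.ne', h1k]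
  have hcalc : ellipticK k = ((lam+4)/2) * ∫ q in (0:ℝ)..Real.pi,
      (Real.sqrt ((lam + 4*Real.sin (q/2)^2) * (lam + 4 + 4*Real.sin (q/2)^2)))⁻¹ := by
    rw [ellipticK, intervalIntegral.integral_of_le zero_le_one,
      MeasureTheory.integral_Ioc_eq_integral_Ioo, key,
      setIntegral_congr_fun measurableSet_Ioo hpt]
    rw [MeasureTheory.integral_const_mul]
    rw [← MeasureTheory.integral_Ioc_eq_integral_Ioo,
      ← intervalIntegral.integral_of_le Real.pi_pos.le]
  rw [hcalc]
  have : lam + 4 ≠ 0 := by linarith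
  field_simp

/-- The Watson integral `W₂(λ)` in closed form: for `λ > 0`,
`∫₀^π∫₀^π π⁻² (λ + 4sin²(q₁/2) + 4sin²(q₂/2))⁻¹ dq₁dq₂ = (2/(π(λ+4))) K(4/(λ+4))`. -/
theorem W2_closed_form (lam : ℝ) (hlam : 0 < lam) :
    ∫ q1 in (0:ℝ)..Real.pi, ∫ q2 in (0:ℝ)..Real.pi,
        (1 / Real.pi ^ 2) * (lam + 4 * Real.sin (q1 / 2) ^ 2 + 4 * Real.sin (q2 / 2) ^ 2)⁻¹
      = (2 / (Real.pi * (lam + 4))) * ellipticK (4 / (lam + 4)) := by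
  have hπ := Real.pi_pos
  have hinner : Set.EqOn
      (fun q1 => ∫ q2 in (0:ℝ)..Real.pi,
        (1 / Real.pi ^ 2) * (lam + 4 * Real.sin (q1 / 2) ^ 2 + 4 * Real.sin (q2 / 2) ^ 2)⁻¹)
      (fun q1 => (1/Real.pi) *
        (Real.sqrt ((lam + 4*Real.sin (q1/2)^2) * (lam + 4 + 4*Real.sin (q1/2)^2)))⁻¹)
      (Set.uIcc 0 Real.pi) := by
    intro q1 _
    simp only []
    rw [intervalIntegral.integral_const_mul]
    have ha : 0 < lam + 4*Real.sin (q1/2)^2 := by positivity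
    rw [stepA _ ha]
    rw [show (lam + 4*Real.sin (q1/2)^2) * (lam + 4*Real.sin (q1/2)^2 + 4)
        = (lam + 4*Real.sin (q1/2)^2) * (lam + 4 + 4*Real.sin (q1/2)^2) from by ring]
    rw [div_eq_mul_inv]
    field_simp
  rw [intervalIntegral.integral_congr hinner]
  rw [intervalIntegral.integral_const_mul, stepB lam hlam]
  rw [eq_comm]
  field_simp
end

section
/- For every real k, the principal-value identity (2/π) · P∫_{−∞}^{∞} (arctan(k')/k') / (k' − k) dk' = −ln(k² + 1)/k holds (with the right-hand side interpreted as 0 at k = 0). -/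
open MeasureTheory Real Filter Set Topology

noncomputable section



/-- integrand of the parameter representation -/
def hh (k t x : ℝ) : ℝ := ((1 + t^2*x^2) * (x - k))⁻¹

/-- antiderivative in `x` -/
def GG (k t x : ℝ) : ℝ :=
  (1 + t^2*k^2)⁻¹ * (Real.log ((x-k)^2) / 2 - Real.log (1 + t^2*x^2) / 2
    - t*k*Real.arctan (t*x))

lemma GG_deriv (k t x : ℝ) (hx : x ≠ k) : HasDerivAt (GG k t) (hh k t x) x := by
  have hxk : x - k ≠ 0 := sub_ne_zero.2 hx
  have h1 : (0:ℝ) < 1 + t^2*x^2 := by positivity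
  have hA : (0:ℝ) < 1 + t^2*k^2 := by positivity
  have l1 : HasDerivAt (fun x : ℝ => Real.log ((x-k)^2))
      ((2 * (x-k)^1 * 1) / (x-k)^2) x := by
    exact (((hasDerivAt_id x).sub_const k).pow 2).log (pow_ne_zero 2 hxk)
  have l2 : HasDerivAt (fun x : ℝ => Real.log (1 + t^2*x^2))
      ((0 + t^2 * (2 * x^1)) / (1 + t^2*x^2)) x := by
    have inner : HasDerivAt (fun x : ℝ => 1 + t^2*x^2) (0 + t^2 * (2 * x^1)) x := by
      simpa using ((hasDerivAt_pow 2 x).const_mul (t^2)).const_add 1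
    exact inner.log (ne_of_gt h1)
  have l3 : HasDerivAt (fun x : ℝ => Real.arctan (t*x))
      (1 / (1 + (t*x)^2) * t) x := by
    exact ((hasDerivAt_id x).const_mul t).arctan.congr_deriv (by simp)
  have main := (((l1.div_const 2).sub (l2.div_const 2)).sub (l3.const_mul (t*k))).const_mul
      ((1 + t^2*k^2)⁻¹)
  refine main.congr_deriv ?_
  unfold hh
  have h2 : (1:ℝ) + (t*x)^2 > 0 := by positivity
  field_simp
  ring


lemma ratio_tendsto_atTop (k t : ℝ) (ht : 0 < t) :
    Tendsto (fun x : ℝ => (x-k)^2 / (1 + t^2*x^2)) atTop (𝓝 ((t^2)⁻¹)) := by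
  have key : Tendsto (fun x : ℝ => (1 - k*x⁻¹)^2 / ((x⁻¹)^2 + t^2)) atTop (𝓝 ((t^2)⁻¹)) := by
    have hinv : Tendsto (fun x : ℝ => x⁻¹) atTop (𝓝 0) := tendsto_inv_atTop_zero
    have num : Tendsto (fun x : ℝ => (1 - k*x⁻¹)^2) atTop (𝓝 1) := by
      have : Tendsto (fun x : ℝ => 1 - k*x⁻¹) atTop (𝓝 1) := by
        simpa using (tendsto_const_nhds.sub (hinv.const_mul k))
      simpa using this.pow 2
    have den : Tendsto (fun x : ℝ => (x⁻¹)^2 + t^2) atTop (𝓝 (t^2)) := by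
      simpa using ((hinv.pow 2).add tendsto_const_nhds)
    have h := num.div den (by positivity)
    rw [one_div] at h
    exact h
  apply key.congr'
  filter_upwards [eventually_gt_atTop 0] with x hx
  have hx' : x ≠ 0 := ne_of_gt hx
  field_simp

lemma ratio_tendsto_atBot (k t : ℝ) (ht : 0 < t) :
    Tendsto (fun x : ℝ => (x-k)^2 / (1 + t^2*x^2)) atBot (𝓝 ((t^2)⁻¹)) := by
  have key : Tendsto (fun x : ℝ => (1 - k*x⁻¹)^2 / ((x⁻¹)^2 + t^2)) atBot (𝓝 ((t^2)⁻¹)) := by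
    have hinv : Tendsto (fun x : ℝ => x⁻¹) atBot (𝓝 0) := by
        simpa [inv_neg] using ((tendsto_inv_atTop_zero (𝕜 := ℝ)).comp tendsto_neg_atBot_atTop).neg
    have num : Tendsto (fun x : ℝ => (1 - k*x⁻¹)^2) atBot (𝓝 1) := by
      have : Tendsto (fun x : ℝ => 1 - k*x⁻¹) atBot (𝓝 1) := by
        simpa using (tendsto_const_nhds.sub (hinv.const_mul k))
      simpa using this.pow 2
    have den : Tendsto (fun x : ℝ => (x⁻¹)^2 + t^2) atBot (𝓝 (t^2)) := by
      simpa using ((hinv.pow 2).add tendsto_const_nhds)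
    have h := num.div den (by positivity)
    rw [one_div] at h
    exact h
  apply key.congr'
  filter_upwards [eventually_lt_atBot 0] with x hx
  have hx' : x ≠ 0 := ne_of_lt hx
  field_simp

lemma log_part_tendsto_atTop (k t : ℝ) (ht : 0 < t) :
    Tendsto (fun x : ℝ => Real.log ((x-k)^2) / 2 - Real.log (1 + t^2*x^2) / 2)
      atTop (𝓝 (-Real.log t)) := by
  have h1 : Tendsto (fun x : ℝ => Real.log ((x-k)^2 / (1 + t^2*x^2)) / 2) atTop
      (𝓝 (Real.log ((t^2)⁻¹) / 2)) := by
    exact (((Real.continuousAt_log (by positivity)).tendsto).comp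
      (ratio_tendsto_atTop k t ht)).div_const 2
  have hval : Real.log ((t^2)⁻¹) / 2 = -Real.log t := by
    rw [Real.log_inv, Real.log_pow]; push_cast; ring
  rw [hval] at h1
  apply h1.congr'
  filter_upwards [eventually_gt_atTop k] with x hx
  have h2 : (0:ℝ) < 1 + t^2*x^2 := by positivity
  rw [Real.log_div (pow_ne_zero 2 (sub_ne_zero.2 (ne_of_gt hx))) (ne_of_gt h2)]
  ring

lemma log_part_tendsto_atBot (k t : ℝ) (ht : 0 < t) :
    Tendsto (fun x : ℝ => Real.log ((x-k)^2) / 2 - Real.log (1 + t^2*x^2) / 2)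
      atBot (𝓝 (-Real.log t)) := by
  have h1 : Tendsto (fun x : ℝ => Real.log ((x-k)^2 / (1 + t^2*x^2)) / 2) atBot
      (𝓝 (Real.log ((t^2)⁻¹) / 2)) := by
    exact (((Real.continuousAt_log (by positivity)).tendsto).comp
      (ratio_tendsto_atBot k t ht)).div_const 2
  have hval : Real.log ((t^2)⁻¹) / 2 = -Real.log t := by
    rw [Real.log_inv, Real.log_pow]; push_cast; ring
  rw [hval] at h1
  apply h1.congr'
  filter_upwards [eventually_lt_atBot k] with x hx
  have h2 : (0:ℝ) < 1 + t^2*x^2 := by positivity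
  have h3 : (x - k)^2 ≠ 0 := pow_ne_zero 2 (sub_ne_zero.2 (ne_of_lt hx))
  rw [Real.log_div h3 (ne_of_gt h2)]
  ring

lemma GG_tendsto_atTop (k t : ℝ) (ht : 0 < t) :
    Tendsto (GG k t) atTop
      (𝓝 ((1 + t^2*k^2)⁻¹ * (-Real.log t - t*k*(Real.pi/2)))) := by
  have harct : Tendsto (fun x : ℝ => Real.arctan (t*x)) atTop (𝓝 (Real.pi/2)) := by
    exact (Real.tendsto_arctan_atTop.mono_right nhdsWithin_le_nhds).comp
      (Tendsto.const_mul_atTop ht tendsto_id)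
  exact (((log_part_tendsto_atTop k t ht).sub (harct.const_mul (t*k))).const_mul _)

lemma GG_tendsto_atBot (k t : ℝ) (ht : 0 < t) :
    Tendsto (GG k t) atBot
      (𝓝 ((1 + t^2*k^2)⁻¹ * (-Real.log t - t*k*(-(Real.pi/2))))) := by
  have harct : Tendsto (fun x : ℝ => Real.arctan (t*x)) atBot (𝓝 (-(Real.pi/2))) := by
    exact (Real.tendsto_arctan_atBot.mono_right nhdsWithin_le_nhds).comp
      (Tendsto.const_mul_atBot ht tendsto_id)
  exact (((log_part_tendsto_atBot k t ht).sub (harct.const_mul (t*k))).const_mul _)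


lemma hh_meas (k t : ℝ) : Measurable (hh k t) := by
  apply Measurable.inv
  exact ((measurable_const.add ((measurable_id.pow_const 2).const_mul (t^2))).mul
    (measurable_id.sub_const k))

lemma hh_norm_eq (k t x : ℝ) : ‖hh k t x‖ = (1 + t^2*x^2)⁻¹ * |x - k|⁻¹ := by
  have h1 : (0:ℝ) < 1 + t^2*x^2 := by positivity
  rw [hh, norm_inv, Real.norm_eq_abs, abs_mul, abs_of_pos h1, mul_inv]

lemma hh_norm_le (k t ε x : ℝ) (hε : 0 < ε) (hx : ε ≤ |x - k|) :
    ‖hh k t x‖ ≤ ε⁻¹ * (1 + (t*x)^2)⁻¹ := by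
  rw [hh_norm_eq, mul_comm, mul_pow]
  have h1 : (0:ℝ) < 1 + t^2*x^2 := by positivity
  exact mul_le_mul_of_nonneg_right (inv_anti₀ hε hx) (by positivity)

lemma base_integrable (t ε : ℝ) (ht : t ≠ 0) :
    Integrable (fun x : ℝ => ε⁻¹ * (1 + (t*x)^2)⁻¹) := by
  exact (integrable_inv_one_add_sq.comp_mul_left' ht).const_mul ε⁻¹

lemma hh_integrableOn (k t ε : ℝ) (ht : t ≠ 0) (hε : 0 < ε) {s : Set ℝ}
    (hs : MeasurableSet s) (hsub : ∀ x ∈ s, ε ≤ |x - k|) :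
    IntegrableOn (hh k t) s := by
  refine Integrable.mono' ((base_integrable t ε ht).integrableOn) ?_ ?_
  · exact ((hh_meas k t).aestronglyMeasurable).restrict
  · rw [ae_restrict_iff' hs]
    exact ae_of_all _ fun x hx => hh_norm_le k t ε x hε (hsub x hx)

lemma hh_neg_integrableOn (k t ε : ℝ) (ht : t ≠ 0) (hε : 0 < ε) :
    IntegrableOn (fun y => hh k t (-y)) (Ioi (-(k-ε))) := by
  refine Integrable.mono' ((base_integrable t ε ht).integrableOn) ?_ ?_
  · exact (((hh_meas k t).comp measurable_neg).aestronglyMeasurable).restrict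
  · rw [ae_restrict_iff' measurableSet_Ioi]
    refine ae_of_all _ fun y hy => ?_
    have h1 : ε ≤ |(-y) - k| := by
      rw [abs_sub_comm]
      have : ε - k < y := by simpa [neg_sub] using hy
      calc ε ≤ k + y := by linarith
        _ ≤ |k + y| := le_abs_self _
        _ = |k - -y| := by ring_nf
    have := hh_norm_le k t ε (-y) hε h1
    simpa [mul_pow] using this

lemma S_eq (k ε : ℝ) : {x : ℝ | ε < |x - k|} = Iio (k-ε) ∪ Ioi (k+ε) := by
  ext x
  simp only [mem_setOf_eq, mem_union, mem_Iio, mem_Ioi, lt_abs]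
  constructor
  · rintro (h | h)
    · right; linarith
    · left; linarith
  · rintro (h | h)
    · right; linarith
    · left; linarith

lemma S_meas (k ε : ℝ) : MeasurableSet {x : ℝ | ε < |x - k|} := by
  have : IsOpen {x : ℝ | ε < |x - k|} :=
    isOpen_lt continuous_const (continuous_abs.comp (continuous_id.sub continuous_const))
  exact this.measurableSet

def Jfun (k t ε : ℝ) : ℝ :=
  (1 + t^2*k^2)⁻¹ * (-(Real.pi*(t*k))
    + t*k*(Real.arctan (t*(k+ε)) - Real.arctan (t*(k-ε)))
    + (Real.log (1 + t^2*(k+ε)^2) - Real.log (1 + t^2*(k-ε)^2))/2)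

lemma integral_Ioi_hh (k t ε : ℝ) (ht : 0 < t) (hε : 0 < ε) :
    ∫ x in Ioi (k+ε), hh k t x
      = (1 + t^2*k^2)⁻¹ * (-Real.log t - t*k*(Real.pi/2)) - GG k t (k+ε) := by
  refine integral_Ioi_of_hasDerivAt_of_tendsto ?_ ?_ ?_ (GG_tendsto_atTop k t ht)
  · exact (GG_deriv k t (k+ε) (by intro h; nlinarith)).continuousAt.continuousWithinAt
  · intro x hx
    simp only [mem_Ioi] at hx
    exact GG_deriv k t x (by intro h; subst h; linarith)
  · exact hh_integrableOn k t ε (ne_of_gt ht) hε measurableSet_Ioi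
      (fun x hx => by
        simp only [mem_Ioi] at hx
        rw [abs_of_pos (by linarith : (0:ℝ) < x - k)]; linarith)

lemma integral_Iio_hh (k t ε : ℝ) (ht : 0 < t) (hε : 0 < ε) :
    ∫ x in Iio (k-ε), hh k t x
      = GG k t (k-ε) - (1 + t^2*k^2)⁻¹ * (-Real.log t - t*k*(-(Real.pi/2))) := by
  have step1 : ∫ x in Iio (k-ε), hh k t x = ∫ y in Ioi (-(k-ε)), hh k t (-y) := by
    have e := integral_comp_neg_Iic (k-ε) (fun y => hh k t (-y))
    simp only [neg_neg] at e
    rw [← integral_Iic_eq_integral_Iio]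
    exact e
  rw [step1]
  have hderiv : ∀ y ∈ Ioi (-(k-ε)), HasDerivAt (fun y => -(GG k t (-y))) (hh k t (-y)) y := by
    intro y hy
    simp only [mem_Ioi] at hy
    have hne : (-y : ℝ) ≠ k := by intro h; rw [← h] at hy; linarith
    have h1 : HasDerivAt (fun y : ℝ => GG k t (-y)) (hh k t (-y) * (-1)) y :=
      (GG_deriv k t (-y) hne).comp y (hasDerivAt_neg' y)
    have h2 := h1.neg
    simp only [mul_neg, mul_one, neg_neg] at h2
    exact h2
  have hcont : ContinuousWithinAt (fun y => -(GG k t (-y))) (Ici (-(k-ε))) (-(k-ε)) := by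
    have hG : ContinuousAt (GG k t) (k-ε) :=
      (GG_deriv k t (k-ε) (by intro h; nlinarith)).continuousAt
    have h2 : ContinuousAt (fun y : ℝ => GG k t (-y)) (-(k-ε)) := by
      apply ContinuousAt.comp (g := GG k t) (f := fun y : ℝ => -y)
      · simpa using hG
      · exact continuous_neg.continuousAt
    exact (h2.neg).continuousWithinAt
  have key := integral_Ioi_of_hasDerivAt_of_tendsto
    (f := fun y => -(GG k t (-y))) (f' := fun y => hh k t (-y))
    hcont hderiv (hh_neg_integrableOn k t ε (ne_of_gt ht) hε)
    (((GG_tendsto_atBot k t ht).comp tendsto_neg_atTop_atBot).neg)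
  rw [key]
  simp
  ring

lemma J_formula (k t ε : ℝ) (ht : 0 < t) (hε : 0 < ε) :
    ∫ x in {x : ℝ | ε < |x - k|}, hh k t x = Jfun k t ε := by
  have hdisj : Disjoint (Iio (k-ε)) (Ioi (k+ε)) := by
    apply Set.disjoint_left.mpr
    intro x hx hx'
    simp only [mem_Iio] at hx
    simp only [mem_Ioi] at hx'
    linarith
  have int1 : IntegrableOn (hh k t) (Iio (k-ε)) := by
    refine hh_integrableOn k t ε (ne_of_gt ht) hε measurableSet_Iio (fun x hx => ?_)
    simp only [mem_Iio] at hx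
    rw [abs_sub_comm, abs_of_pos (by linarith : (0:ℝ) < k - x)]; linarith
  have int2 : IntegrableOn (hh k t) (Ioi (k+ε)) := by
    refine hh_integrableOn k t ε (ne_of_gt ht) hε measurableSet_Ioi (fun x hx => ?_)
    simp only [mem_Ioi] at hx
    rw [abs_of_pos (by linarith : (0:ℝ) < x - k)]; linarith
  rw [S_eq, setIntegral_union hdisj measurableSet_Ioi int1 int2,
    integral_Ioi_hh k t ε ht hε, integral_Iio_hh k t ε ht hε]
  unfold GG Jfun
  rw [show k + ε - k = ε by ring, show k - ε - k = -ε by ring,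
    show (-ε)^2 = ε^2 by ring]
  ring
lemma my_arctan_nonneg {y : ℝ} (h : 0 ≤ y) : 0 ≤ Real.arctan y := by
  rw [← Real.arctan_zero]
  exact Real.arctan_strictMono.monotone h

lemma my_arctan_le_self {y : ℝ} (h : 0 ≤ y) : Real.arctan y ≤ y := by
  calc Real.arctan y ≤ Real.tan (Real.arctan y) :=
        Real.le_tan (my_arctan_nonneg h) (Real.arctan_lt_pi_div_two y)
    _ = y := Real.tan_arctan y

lemma arctan_div_eq_abs (x : ℝ) : Real.arctan x / x = Real.arctan |x| / |x| := by
  rcases le_or_gt 0 x with h|h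
  · rw [abs_of_nonneg h]
  · rw [abs_of_neg h, Real.arctan_neg, neg_div_neg_eq]

lemma arctan_div_nonneg (x : ℝ) : 0 ≤ Real.arctan x / x := by
  rw [arctan_div_eq_abs]
  exact div_nonneg (my_arctan_nonneg (abs_nonneg x)) (abs_nonneg x)

lemma arctan_div_le_one (x : ℝ) : Real.arctan x / x ≤ 1 := by
  rw [arctan_div_eq_abs]
  rcases eq_or_lt_of_le (abs_nonneg x) with h|h
  · rw [← h]; norm_num
  · exact (div_le_one h).2 (my_arctan_le_self (abs_nonneg x))

lemma arctan_div_le_pi (x : ℝ) : Real.arctan x / x ≤ (Real.pi/2) * |x|⁻¹ := by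
  rw [arctan_div_eq_abs]
  rcases eq_or_lt_of_le (abs_nonneg x) with h|h
  · rw [← h]; norm_num
  · rw [div_eq_mul_inv]
    exact mul_le_mul_of_nonneg_right (le_of_lt (Real.arctan_lt_pi_div_two _))
      (by positivity)

lemma hh_cont_t (k x : ℝ) (hxk : x ≠ k) : Continuous (fun t : ℝ => hh k t x) := by
  apply Continuous.inv₀
  · exact (continuous_const.add ((continuous_pow 2).mul continuous_const)).mul
      continuous_const
  · intro t
    exact mul_ne_zero (by positivity) (sub_ne_zero.2 hxk)

lemma inner_integral (k x : ℝ) (hx : x ≠ 0) (hxk : x ≠ k) :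
    ∫ t in Ioc (0:ℝ) 1, hh k t x = (Real.arctan x / x) / (x - k) := by
  have hxk' : x - k ≠ 0 := sub_ne_zero.2 hxk
  rw [← intervalIntegral.integral_of_le zero_le_one]
  have hderiv : ∀ t ∈ uIcc (0:ℝ) 1,
      HasDerivAt (fun t => Real.arctan (t*x) * (x*(x-k))⁻¹) (hh k t x) t := by
    intro t _
    have h1 : HasDerivAt (fun t : ℝ => Real.arctan (t*x))
        (1 / (1 + (t*x)^2) * x) t := (hasDerivAt_mul_const x).arctan
    have h2 := h1.mul_const ((x*(x-k))⁻¹)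
    refine h2.congr_deriv ?_
    unfold hh
    have : (0:ℝ) < 1 + (t*x)^2 := by positivity
    field_simp
  rw [intervalIntegral.integral_eq_sub_of_hasDerivAt hderiv
    ((hh_cont_t k x hxk).intervalIntegrable 0 1)]
  simp only [one_mul, zero_mul, Real.arctan_zero]
  rw [div_div, div_eq_mul_inv]
  ring

lemma inner_norm_integral (k x : ℝ) (hx : x ≠ 0) :
    ∫ t in Ioc (0:ℝ) 1, ‖hh k t x‖ = (Real.arctan x / x) * |x - k|⁻¹ := by
  have : ∀ t : ℝ, ‖hh k t x‖ = (1 + t^2*x^2)⁻¹ * |x-k|⁻¹ := fun t => hh_norm_eq k t x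
  rw [setIntegral_congr_fun measurableSet_Ioc (fun t _ => this t)]
  rw [integral_mul_const]
  congr 1
  rw [← intervalIntegral.integral_of_le zero_le_one]
  have hderiv : ∀ t ∈ uIcc (0:ℝ) 1,
      HasDerivAt (fun t => Real.arctan (t*x) * x⁻¹) ((1 + t^2*x^2)⁻¹) t := by
    intro t _
    have h1 : HasDerivAt (fun t : ℝ => Real.arctan (t*x))
        (1 / (1 + (t*x)^2) * x) t := (hasDerivAt_mul_const x).arctan
    have h2 := h1.mul_const (x⁻¹)
    refine h2.congr_deriv ?_
    have : (0:ℝ) < 1 + (t*x)^2 := by positivity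
    field_simp
  have hcont : Continuous (fun t : ℝ => (1 + t^2*x^2)⁻¹) := by
    apply Continuous.inv₀
    · exact continuous_const.add ((continuous_pow 2).mul continuous_const)
    · intro t; positivity
  rw [intervalIntegral.integral_eq_sub_of_hasDerivAt hderiv (hcont.intervalIntegrable 0 1)]
  simp only [one_mul, zero_mul, Real.arctan_zero]
  rw [div_eq_mul_inv]
  ring
lemma bound_pointwise (k ε x : ℝ) (hε : 0 < ε) (hS : ε < |x-k|) :
    (Real.arctan x / x) * |x-k|⁻¹
      ≤ (max ((1+(2*|k|+2)^2)/ε) (2*Real.pi)) * (1+x^2)⁻¹ := by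
  set M := 2*|k|+2 with hM
  set C := max ((1+M^2)/ε) (2*Real.pi) with hC
  have hMpos : (0:ℝ) < M := by positivity
  have hCpos : (0:ℝ) < C := lt_max_iff.2 (Or.inr (by positivity))
  rcases le_or_gt |x| M with hcase|hcase
  · have l1 : (Real.arctan x / x) * |x-k|⁻¹ ≤ 1 * ε⁻¹ :=
      mul_le_mul (arctan_div_le_one x) (inv_anti₀ hε hS.le)
        (by positivity) zero_le_one
    rw [one_mul] at l1
    refine l1.trans ?_
    have hx2 : x^2 ≤ M^2 := by
      rw [← sq_abs]
      exact pow_le_pow_left₀ (abs_nonneg x) hcase 2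
    calc ε⁻¹ = (1+M^2)/ε * (1+M^2)⁻¹ := by field_simp
      _ ≤ C * (1+M^2)⁻¹ :=
          mul_le_mul_of_nonneg_right (le_max_left _ _) (by positivity)
      _ ≤ C * (1+x^2)⁻¹ :=
          mul_le_mul_of_nonneg_left (inv_anti₀ (by positivity) (by linarith)) hCpos.le
  · have hx1 : (1:ℝ) ≤ |x| := by
      have h2 : (2:ℝ) ≤ M := by rw [hM]; linarith [abs_nonneg k]
      linarith
    have hx0 : x ≠ 0 := by intro h; rw [h] at hx1; simp at hx1; linarith
    have hk2 : |k| ≤ |x|/2 := by rw [hM] at hcase; linarith [abs_nonneg k]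
    have hxk2 : |x|/2 ≤ |x-k| := by
      have := abs_sub_abs_le_abs_sub x k
      linarith
    have l1 : (Real.arctan x / x) * |x-k|⁻¹ ≤ ((Real.pi/2) * |x|⁻¹) * (|x|/2)⁻¹ :=
      mul_le_mul (arctan_div_le_pi x) (inv_anti₀ (by positivity) hxk2)
        (by positivity) (by positivity)
    refine l1.trans ?_
    have habs : |x| ≠ 0 := by positivity
    have heq : ((Real.pi/2) * |x|⁻¹) * (|x|/2)⁻¹ = Real.pi * (x^2)⁻¹ := by
      rw [← sq_abs]
      field_simp
    rw [heq]
    have hle : (1:ℝ)+x^2 ≤ 2*x^2 := by nlinarith [sq_abs x]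
    have i1 : ((2:ℝ)*x^2)⁻¹ ≤ (1+x^2)⁻¹ := inv_anti₀ (by positivity) hle
    have i2 : (x^2:ℝ)⁻¹ = 2 * (2*x^2)⁻¹ := by
      have : x^2 ≠ 0 := by positivity
      field_simp
    calc Real.pi * (x^2)⁻¹ = (2*Real.pi) * (2*x^2)⁻¹ := by rw [i2]; ring
      _ ≤ (2*Real.pi) * (1+x^2)⁻¹ :=
          mul_le_mul_of_nonneg_left i1 (by positivity)
      _ ≤ C * (1+x^2)⁻¹ :=
          mul_le_mul_of_nonneg_right (le_max_right _ _) (by positivity)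

lemma ae_ne_zero : ∀ᵐ x : ℝ, x ≠ (0:ℝ) := by
  rw [ae_iff]
  have h : {x : ℝ | ¬ x ≠ 0} = {0} := by ext x; simp
  rw [h]
  exact Real.volume_singleton

lemma fubini_eq (k ε : ℝ) (hε : 0 < ε) :
    ∫ x in {x : ℝ | ε < |x-k|}, (Real.arctan x / x) / (x - k)
      = ∫ t in Ioc (0:ℝ) 1, Jfun k t ε := by
  set S := {x : ℝ | ε < |x-k|} with hSdef
  have hSm : MeasurableSet S := S_meas k ε
  have hxk : ∀ x ∈ S, x ≠ k := by
    intro x hx h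
    rw [hSdef, mem_setOf_eq, h] at hx
    simp at hx
    linarith
  have hmeasPB : AEStronglyMeasurable (fun p : ℝ×ℝ => hh k p.2 p.1)
      ((volume.restrict S).prod (volume.restrict (Ioc 0 1))) := by
    apply Measurable.aestronglyMeasurable
    exact ((measurable_const.add ((measurable_snd.pow_const 2).mul
      (measurable_fst.pow_const 2))).mul (measurable_fst.sub measurable_const)).inv
  have hint : Integrable (fun p : ℝ×ℝ => hh k p.2 p.1)
      ((volume.restrict S).prod (volume.restrict (Ioc 0 1))) := by
    rw [integrable_prod_iff hmeasPB]
    constructor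
    · rw [ae_restrict_iff' hSm]
      refine ae_of_all _ fun x hx => ?_
      exact (hh_cont_t k x (hxk x hx)).integrableOn_Ioc
    · apply Integrable.mono'
        (g := fun x => (max ((1+(2*|k|+2)^2)/ε) (2*Real.pi)) * (1+x^2)⁻¹)
      · exact (integrable_inv_one_add_sq.const_mul _).integrableOn
      · have mnorm : Measurable (Function.uncurry fun (x t : ℝ) => ‖hh k t x‖) := by
          exact (((measurable_const.add ((measurable_snd.pow_const 2).mul
            (measurable_fst.pow_const 2))).mul
            (measurable_fst.sub measurable_const)).inv).norm
        exact (mnorm.stronglyMeasurable.integral_prod_right).aestronglyMeasurable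
      · rw [ae_restrict_iff' hSm]
        filter_upwards [ae_ne_zero] with x hx0
        intro hxS
        rw [inner_norm_integral k x hx0, Real.norm_eq_abs, abs_of_nonneg
          (mul_nonneg (arctan_div_nonneg x) (inv_nonneg.2 (abs_nonneg _)))]
        exact bound_pointwise k ε x hε hxS
  calc ∫ x in S, (Real.arctan x / x) / (x - k)
      = ∫ x in S, ∫ t in Ioc (0:ℝ) 1, hh k t x := by
        refine setIntegral_congr_ae hSm ?_
        filter_upwards [ae_ne_zero] with x hx0
        intro hxS
        exact (inner_integral k x hx0 (hxk x hxS)).symm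
    _ = ∫ t in Ioc (0:ℝ) 1, ∫ x in S, hh k t x :=
        integral_integral_swap hint
    _ = ∫ t in Ioc (0:ℝ) 1, Jfun k t ε := by
        refine setIntegral_congr_fun measurableSet_Ioc fun t ht => ?_
        exact J_formula k t ε ht.1 hε
lemma Jfun_cont_t (k ε : ℝ) : Continuous (fun t => Jfun k t ε) := by
  unfold Jfun
  refine Continuous.mul (Continuous.inv₀ (by continuity) (fun t => by positivity)) ?_
  refine Continuous.add (Continuous.add (by continuity) ?_) ?_
  · exact (continuous_id.mul continuous_const).mul
      ((Real.continuous_arctan.comp (by continuity)).sub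
        (Real.continuous_arctan.comp (by continuity)))
  · exact (((Continuous.log (by continuity) (fun t => by positivity)).sub
      (Continuous.log (by continuity) (fun t => by positivity))).div_const 2)

lemma Jfun_cont_eps (k t : ℝ) : Continuous (fun ε => Jfun k t ε) := by
  unfold Jfun
  refine Continuous.mul continuous_const ?_
  refine Continuous.add (Continuous.add continuous_const ?_) ?_
  · exact continuous_const.mul
      ((Real.continuous_arctan.comp (by continuity)).sub
        (Real.continuous_arctan.comp (by continuity)))
  · exact (((Continuous.log (by continuity) (fun ε => by positivity)).sub
      (Continuous.log (by continuity) (fun ε => by positivity))).div_const 2)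

lemma Jfun_zero (k t : ℝ) : Jfun k t 0 = -(Real.pi*(t*k)) * (1+t^2*k^2)⁻¹ := by
  unfold Jfun
  simp only [add_zero, sub_zero]
  ring

lemma Jfun_bound (k t ε : ℝ) (ht : t ∈ Ioc (0:ℝ) 1) (hε : ε ∈ Ioc (0:ℝ) 1) :
    ‖Jfun k t ε‖ ≤ 2*Real.pi*|k| + Real.log (1+(|k|+1)^2) := by
  obtain ⟨ht0, ht1⟩ := ht
  obtain ⟨hε0, hε1⟩ := hε
  set L := Real.log (1+(|k|+1)^2) with hLdef
  have hL0 : 0 ≤ L := Real.log_nonneg (by nlinarith [abs_nonneg k])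
  have htk : |t*k| ≤ |k| := by
    rw [abs_mul, abs_of_pos ht0]
    nlinarith [abs_nonneg k]
  have harg : ∀ y : ℝ, |y| ≤ |k| + 1 →
      0 ≤ Real.log (1+t^2*y^2) ∧ Real.log (1+t^2*y^2) ≤ L := by
    intro y hy
    constructor
    · exact Real.log_nonneg (by nlinarith [sq_nonneg (t*y), sq_nonneg t, sq_nonneg y])
    · apply Real.log_le_log (by positivity)
      have h2 : y^2 ≤ (|k|+1)^2 := by
        rw [← sq_abs]
        nlinarith [abs_nonneg y]
      have ht2 : t^2 ≤ 1 := by nlinarith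
      have h3 : t^2*y^2 ≤ y^2 := by nlinarith [sq_nonneg y]
      nlinarith
  have habs1 : |k+ε| ≤ |k| + 1 := (abs_add_le k ε).trans (by rw [abs_of_pos hε0]; linarith)
  have habs2 : |k-ε| ≤ |k| + 1 := by
    rw [sub_eq_add_neg]
    exact (abs_add_le k (-ε)).trans (by rw [abs_neg, abs_of_pos hε0]; linarith)
  obtain ⟨hl1a, hl1b⟩ := harg (k+ε) habs1
  obtain ⟨hl2a, hl2b⟩ := harg (k-ε) habs2
  have ha1 : |Real.arctan (t*(k+ε))| ≤ Real.pi/2 :=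
    abs_le.2 ⟨(Real.neg_pi_div_two_lt_arctan _).le, (Real.arctan_lt_pi_div_two _).le⟩
  have ha2 : |Real.arctan (t*(k-ε))| ≤ Real.pi/2 :=
    abs_le.2 ⟨(Real.neg_pi_div_two_lt_arctan _).le, (Real.arctan_lt_pi_div_two _).le⟩
  have hd : |Real.arctan (t*(k+ε)) - Real.arctan (t*(k-ε))| ≤ Real.pi := by
    calc |Real.arctan (t*(k+ε)) - Real.arctan (t*(k-ε))|
        ≤ |Real.arctan (t*(k+ε))| + |Real.arctan (t*(k-ε))| := abs_sub _ _
      _ ≤ Real.pi := by linarith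
  have hA : |(1+t^2*k^2)⁻¹| ≤ 1 := by
    rw [abs_of_pos (by positivity)]
    exact inv_le_one_of_one_le₀ (by nlinarith [sq_nonneg (t*k)])
  have hb1 : |(-(Real.pi*(t*k)))| ≤ Real.pi * |k| := by
    rw [abs_neg, abs_mul, abs_of_pos Real.pi_pos]
    exact mul_le_mul_of_nonneg_left htk Real.pi_pos.le
  have hb2 : |t*k*(Real.arctan (t*(k+ε)) - Real.arctan (t*(k-ε)))| ≤ |k| * Real.pi := by
    rw [abs_mul]
    exact mul_le_mul htk hd (abs_nonneg _) (abs_nonneg _)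
  have hb3 : |(Real.log (1+t^2*(k+ε)^2) - Real.log (1+t^2*(k-ε)^2))/2| ≤ L := by
    rw [abs_div, abs_two]
    have : |Real.log (1+t^2*(k+ε)^2) - Real.log (1+t^2*(k-ε)^2)| ≤ L :=
      abs_le.2 ⟨by linarith, by linarith⟩
    linarith
  have hinner : |(-(Real.pi*(t*k))
      + t*k*(Real.arctan (t*(k+ε)) - Real.arctan (t*(k-ε)))
      + (Real.log (1+t^2*(k+ε)^2) - Real.log (1+t^2*(k-ε)^2))/2)|
      ≤ Real.pi * |k| + |k| * Real.pi + L := by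
    have tri1 := abs_add_le
      (-(Real.pi*(t*k)) + t*k*(Real.arctan (t*(k+ε)) - Real.arctan (t*(k-ε))))
      ((Real.log (1+t^2*(k+ε)^2) - Real.log (1+t^2*(k-ε)^2))/2)
    have tri2 := abs_add_le (-(Real.pi*(t*k)))
      (t*k*(Real.arctan (t*(k+ε)) - Real.arctan (t*(k-ε))))
    linarith
  calc ‖Jfun k t ε‖
      = |(1+t^2*k^2)⁻¹| * |(-(Real.pi*(t*k))
        + t*k*(Real.arctan (t*(k+ε)) - Real.arctan (t*(k-ε)))
        + (Real.log (1+t^2*(k+ε)^2) - Real.log (1+t^2*(k-ε)^2))/2)| := by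
          rw [Real.norm_eq_abs]
          unfold Jfun
          rw [abs_mul]
    _ ≤ 1 * (Real.pi * |k| + |k| * Real.pi + L) :=
        mul_le_mul hA hinner (abs_nonneg _) zero_le_one
    _ ≤ 2*Real.pi*|k| + L := by rw [one_mul]; linarith

lemma tendsto_J (k : ℝ) :
    Tendsto (fun ε => ∫ t in Ioc (0:ℝ) 1, Jfun k t ε) (𝓝[>] (0:ℝ))
      (𝓝 (∫ t in Ioc (0:ℝ) 1, -(Real.pi*(t*k)) * (1+t^2*k^2)⁻¹)) := by
  have lim_eq : ∀ t : ℝ, Tendsto (fun ε => Jfun k t ε) (𝓝[>] (0:ℝ))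
      (𝓝 (-(Real.pi*(t*k)) * (1+t^2*k^2)⁻¹)) := by
    intro t
    rw [← Jfun_zero k t]
    exact ((Jfun_cont_eps k t).tendsto 0).mono_left nhdsWithin_le_nhds
  refine tendsto_integral_filter_of_dominated_convergence
    (bound := fun _ => 2*Real.pi*|k| + Real.log (1+(|k|+1)^2)) ?_ ?_ ?_ ?_
  · exact Eventually.of_forall fun ε =>
      ((Jfun_cont_t k ε).aestronglyMeasurable).restrict
  · filter_upwards [Ioc_mem_nhdsGT zero_lt_one] with ε hε
    rw [ae_restrict_iff' measurableSet_Ioc]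
    exact ae_of_all _ fun t ht => Jfun_bound k t ε ht hε
  · refine integrableOn_const ?_
    rw [Real.volume_Ioc]
    exact ENNReal.ofReal_ne_top
  · exact ae_of_all _ fun t => lim_eq t

lemma final_integral (k : ℝ) :
    (2/Real.pi) * ∫ t in Ioc (0:ℝ) 1, -(Real.pi*(t*k)) * (1+t^2*k^2)⁻¹
      = if k = 0 then 0 else -Real.log (k^2+1)/k := by
  by_cases hk : k = 0
  · subst hk
    simp
  · rw [if_neg hk]
    have hval : ∫ t in Ioc (0:ℝ) 1, -(Real.pi*(t*k)) * (1+t^2*k^2)⁻¹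
        = -(Real.pi/(2*k)) * Real.log (1+k^2) := by
      rw [← intervalIntegral.integral_of_le zero_le_one]
      have hderiv : ∀ t ∈ uIcc (0:ℝ) 1,
          HasDerivAt (fun t => -(Real.pi/(2*k)) * Real.log (1+t^2*k^2))
            (-(Real.pi*(t*k)) * (1+t^2*k^2)⁻¹) t := by
        intro t _
        have inner : HasDerivAt (fun t : ℝ => 1+t^2*k^2) ((2:ℕ)*t^(2-1)*k^2) t :=
          ((hasDerivAt_pow 2 t).mul_const (k^2)).const_add 1
        have hlog := (inner.log (by positivity)).const_mul (-(Real.pi/(2*k)))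
        refine hlog.congr_deriv ?_
        have hpos : (0:ℝ) < 1+t^2*k^2 := by positivity
        field_simp
        ring
      have hcont : Continuous (fun t : ℝ => -(Real.pi*(t*k)) * (1+t^2*k^2)⁻¹) := by
        refine Continuous.mul (by continuity)
          (Continuous.inv₀ (by continuity) (fun t => by positivity))
      rw [intervalIntegral.integral_eq_sub_of_hasDerivAt hderiv
        (hcont.intervalIntegrable 0 1)]
      norm_num
    rw [hval]
    have hπ : Real.pi ≠ 0 := Real.pi_ne_zero
    rw [show (1:ℝ)+k^2 = k^2+1 by ring]
    field_simp

end

/-- For every real `k`, the Cauchy principal value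
`(2/π) P∫_{−∞}^{∞} (arctan k')/k' / (k' − k) dk'` equals `−ln(k²+1)/k`
(interpreted as `0` at `k = 0`). -/
theorem hilbert_transform_arctan (k : ℝ) :
    Tendsto
      (fun ε : ℝ => (2 / Real.pi) *
        ∫ k' in {x : ℝ | ε < |x - k|}, (Real.arctan k' / k') / (k' - k))
      (nhdsWithin 0 (Set.Ioi 0))
      (nhds (if k = 0 then 0 else -Real.log (k ^ 2 + 1) / k)) := by
  have main := (tendsto_J k).const_mul (2/Real.pi)
  rw [final_integral k] at main
  refine main.congr' ?_
  filter_upwards [self_mem_nhdsWithin] with ε hε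
  rw [fubini_eq k ε (mem_Ioi.1 hε)]
end

section
/- The integral ∫₀^{1/2} [π⁴/sin⁴(πz) − 1/z⁴ − (2π²/3)/z²] dz converges and equals (4/3)·(2 + π²). -/
open MeasureTheory Real

lemma mono_aux {f f' : ℝ → ℝ} (hf : ∀ x, HasDerivAt f (f' x) x)
    (h0 : ∀ x, 0 < x → 0 ≤ f' x) {x : ℝ} (hx : 0 ≤ x) : f 0 ≤ f x := by
  have hmono : MonotoneOn f (Set.Ici 0) := by
    apply monotoneOn_of_deriv_nonneg (convex_Ici 0)
    · exact fun y _ => (hf y).continuousAt.continuousWithinAt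
    · intro y hy
      rw [interior_Ici] at hy
      exact (hf y).differentiableAt.differentiableWithinAt
    · intro y hy
      rw [interior_Ici] at hy
      rw [(hf y).deriv]
      exact h0 y hy
  exact hmono Set.self_mem_Ici hx hx

lemma sin_ge_aux {x : ℝ} (hx : 0 ≤ x) : x - x ^ 3 / 6 ≤ Real.sin x := by
  have h := mono_aux (f := fun x => Real.sin x - x + x ^ 3 / 6)
      (f' := fun x => Real.cos x - 1 + x ^ 2 / 2) ?_ ?_ hx
  · simp only [Real.sin_zero] at h
    norm_num at h
    linarith
  · intro y
    have h1 := (((Real.hasDerivAt_sin y).sub (hasDerivAt_id y)).add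
      ((hasDerivAt_pow 3 y).div_const 6))
    refine h1.congr_deriv ?_
    push_cast
    ring
  · intro y _
    have := Real.one_sub_sq_div_two_le_cos (x := y)
    linarith

lemma cos_le_aux {x : ℝ} (hx : 0 ≤ x) : Real.cos x ≤ 1 - x ^ 2 / 2 + x ^ 4 / 24 := by
  have h := mono_aux (f := fun x => 1 - x ^ 2 / 2 + x ^ 4 / 24 - Real.cos x)
      (f' := fun x => -x + x ^ 3 / 6 + Real.sin x) ?_ ?_ hx
  · simp only [Real.cos_zero] at h
    norm_num at h
    linarith
  · intro y
    have h1 := (((hasDerivAt_const y (1:ℝ)).sub ((hasDerivAt_pow 2 y).div_const 2)).add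
        ((hasDerivAt_pow 4 y).div_const 24)).sub (Real.hasDerivAt_cos y)
    refine h1.congr_deriv ?_
    push_cast
    ring
  · intro y hy
    have := sin_ge_aux hy.le
    linarith

lemma sin_le_aux {x : ℝ} (hx : 0 ≤ x) : Real.sin x ≤ x - x ^ 3 / 6 + x ^ 5 / 120 := by
  have h := mono_aux (f := fun x => x - x ^ 3 / 6 + x ^ 5 / 120 - Real.sin x)
      (f' := fun x => 1 - x ^ 2 / 2 + x ^ 4 / 24 - Real.cos x) ?_ ?_ hx
  · simp only [Real.sin_zero] at h
    norm_num at h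
    linarith
  · intro y
    have h1 := (((hasDerivAt_id y).sub ((hasDerivAt_pow 3 y).div_const 6)).add
        ((hasDerivAt_pow 5 y).div_const 120)).sub (Real.hasDerivAt_sin y)
    refine h1.congr_deriv ?_
    push_cast
    ring
  · intro y hy
    have := cos_le_aux hy.le
    linarith

lemma cos_ge_aux {x : ℝ} (hx : 0 ≤ x) :
    1 - x ^ 2 / 2 + x ^ 4 / 24 - x ^ 6 / 720 ≤ Real.cos x := by
  have h := mono_aux (f := fun x => Real.cos x - 1 + x ^ 2 / 2 - x ^ 4 / 24 + x ^ 6 / 720)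
      (f' := fun x => -Real.sin x + x - x ^ 3 / 6 + x ^ 5 / 120) ?_ ?_ hx
  · simp only [Real.cos_zero] at h
    norm_num at h
    linarith
  · intro y
    have h1 := ((((Real.hasDerivAt_cos y).sub (hasDerivAt_const y (1:ℝ))).add
        ((hasDerivAt_pow 2 y).div_const 2)).sub ((hasDerivAt_pow 4 y).div_const 24)).add
        ((hasDerivAt_pow 6 y).div_const 720)
    refine h1.congr_deriv ?_
    push_cast
    ring
  · intro y hy
    have := sin_le_aux hy.le
    linarith

/-- Key bound for integrability: `0 ≤ 3t⁴ - (3+2t²)sin⁴t ≤ t⁸` on `(0, 1.6]`. -/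
lemma M_bound {t : ℝ} (h0 : 0 < t) (h1 : t ≤ 1.6) :
    0 ≤ 3 * t ^ 4 - 3 * Real.sin t ^ 4 - 2 * t ^ 2 * Real.sin t ^ 4 ∧
    3 * t ^ 4 - 3 * Real.sin t ^ 4 - 2 * t ^ 2 * Real.sin t ^ 4 ≤ t ^ 8 := by
  set s := Real.sin t with hs
  have hsl : t - t ^ 3 / 6 ≤ s := sin_ge_aux h0.le
  have hsu : s ≤ t - t ^ 3 / 6 + t ^ 5 / 120 := sin_le_aux h0.le
  have hL0 : 0 ≤ t - t ^ 3 / 6 := by nlinarith [sq_nonneg t, h0.le]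
  have hU0 : 0 ≤ t - t ^ 3 / 6 + t ^ 5 / 120 := by nlinarith
  have hs0 : 0 ≤ s := le_trans hL0 hsl
  have h4l : (t - t ^ 3 / 6) ^ 4 ≤ s ^ 4 := pow_le_pow_left₀ hL0 hsl 4
  have h4u : s ^ 4 ≤ (t - t ^ 3 / 6 + t ^ 5 / 120) ^ 4 := pow_le_pow_left₀ hs0 hsu 4
  constructor
  · have key : 3 * t ^ 4 - (3 + 2 * t ^ 2) * (t - t ^ 3 / 6 + t ^ 5 / 120) ^ 4
        = t ^ 8 * (11/15 - (53/180) * t ^ 2 + (421/7200) * t ^ 4 - (457/64800) * t ^ 6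
          + (353/648000) * t ^ 8 - (23/864000) * t ^ 10 + (157/207360000) * t ^ 12
          - (1/103680000) * t ^ 14) := by ring
    have hq : 0 ≤ 11/15 - (53/180) * t ^ 2 + (421/7200) * t ^ 4 - (457/64800) * t ^ 6
          + (353/648000) * t ^ 8 - (23/864000) * t ^ 10 + (157/207360000) * t ^ 12
          - (1/103680000) * t ^ 14 := by
      have h2 : t ^ 2 ≤ 2.56 := by nlinarith
      nlinarith [sq_nonneg (t^2), sq_nonneg (t^4), sq_nonneg (t^6), pow_nonneg h0.le 2,
        pow_nonneg h0.le 6, pow_nonneg h0.le 10, sq_nonneg (11/15 - (53/180) * t^2),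
        mul_nonneg (pow_nonneg h0.le 6) (sub_nonneg.2 h2)]
    nlinarith [mul_nonneg (pow_nonneg h0.le 8) hq]
  · have key : 3 * t ^ 4 - (3 + 2 * t ^ 2) * (t - t ^ 3 / 6) ^ 4
        = t ^ 8 * (5/6 - (5/18) * t ^ 2 + (5/144) * t ^ 4 - (1/648) * t ^ 6) := by ring
    have hq : 5/6 - (5/18) * t ^ 2 + (5/144) * t ^ 4 - (1/648) * t ^ 6 ≤ 1 := by
      nlinarith [pow_nonneg h0.le 2, pow_nonneg h0.le 4, pow_nonneg h0.le 6]
    nlinarith [pow_pos h0 8]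

set_option maxHeartbeats 2000000 in
lemma N_poly {t s c : ℝ} (h0 : 0 < t) (h1 : t ≤ 1)
    (hsl : t - t ^ 3 / 6 ≤ s) (hsu : s ≤ t - t ^ 3 / 6 + t ^ 5 / 120)
    (hcl : 1 - t ^ 2 / 2 + t ^ 4 / 24 - t ^ 6 / 720 ≤ c)
    (hcu : c ≤ 1 - t ^ 2 / 2 + t ^ 4 / 24) :
    0 ≤ s ^ 3 + 2 * t ^ 2 * s ^ 3 - 3 * t ^ 3 * c * s ^ 2 - t ^ 3 * c ^ 3 ∧
    s ^ 3 + 2 * t ^ 2 * s ^ 3 - 3 * t ^ 3 * c * s ^ 2 - t ^ 3 * c ^ 3 ≤ t ^ 7 := by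
  have hL0 : 0 ≤ t - t ^ 3 / 6 := by nlinarith
  have hU0 : 0 ≤ t - t ^ 3 / 6 + t ^ 5 / 120 := by nlinarith
  have hcl0 : 0 ≤ 1 - t ^ 2 / 2 + t ^ 4 / 24 - t ^ 6 / 720 := by nlinarith
  have hs0 : 0 ≤ s := le_trans hL0 hsl
  have hc0 : 0 ≤ c := le_trans hcl0 hcl
  -- powers
  have h3l : (t - t ^ 3 / 6) ^ 3 ≤ s ^ 3 := pow_le_pow_left₀ hL0 hsl 3
  have h3u : s ^ 3 ≤ (t - t ^ 3 / 6 + t ^ 5 / 120) ^ 3 := pow_le_pow_left₀ hs0 hsu 3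
  have h2l : (t - t ^ 3 / 6) ^ 2 ≤ s ^ 2 := pow_le_pow_left₀ hL0 hsl 2
  have h2u : s ^ 2 ≤ (t - t ^ 3 / 6 + t ^ 5 / 120) ^ 2 := pow_le_pow_left₀ hs0 hsu 2
  have hc3l : (1 - t ^ 2 / 2 + t ^ 4 / 24 - t ^ 6 / 720) ^ 3 ≤ c ^ 3 :=
    pow_le_pow_left₀ hcl0 hcl 3
  have hc3u : c ^ 3 ≤ (1 - t ^ 2 / 2 + t ^ 4 / 24) ^ 3 := pow_le_pow_left₀ hc0 hcu 3
  -- products cs² bounds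
  have hcs2l : (1 - t ^ 2 / 2 + t ^ 4 / 24 - t ^ 6 / 720) * (t - t ^ 3 / 6) ^ 2 ≤ c * s ^ 2 :=
    mul_le_mul hcl h2l (by positivity) hc0
  have hcs2u : c * s ^ 2 ≤ (1 - t ^ 2 / 2 + t ^ 4 / 24) * (t - t ^ 3 / 6 + t ^ 5 / 120) ^ 2 :=
    mul_le_mul hcu h2u (by positivity) (by nlinarith)
  have ht3 : (0:ℝ) ≤ t ^ 3 := by positivity
  have ht2 : (0:ℝ) ≤ 1 + 2 * t ^ 2 := by positivity
  constructor
  · -- lower: N ≥ Nl ≥ 0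
    have key : (1 + 2 * t ^ 2) * (t - t ^ 3 / 6) ^ 3
        - 3 * t ^ 3 * ((1 - t ^ 2 / 2 + t ^ 4 / 24) * (t - t ^ 3 / 6 + t ^ 5 / 120) ^ 2)
        - t ^ 3 * (1 - t ^ 2 / 2 + t ^ 4 / 24) ^ 3
        = t ^ 7 * (17/24 - (187/540) * t ^ 2 + (613/8640) * t ^ 4 - (211/28800) * t ^ 6
          + (131/345600) * t ^ 8 - (1/115200) * t ^ 10) := by ring
    have hq : 0 ≤ 17/24 - (187/540) * t ^ 2 + (613/8640) * t ^ 4 - (211/28800) * t ^ 6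
          + (131/345600) * t ^ 8 - (1/115200) * t ^ 10 := by
      nlinarith [pow_nonneg h0.le 2, pow_nonneg h0.le 4, pow_nonneg h0.le 6,
        pow_nonneg h0.le 8, pow_nonneg h0.le 10, pow_le_one₀ h0.le h1 (n := 2),
        pow_le_one₀ h0.le h1 (n := 6), pow_le_one₀ h0.le h1 (n := 10)]
    have p1 := mul_le_mul_of_nonneg_left hcs2u (by positivity : (0:ℝ) ≤ 3 * t ^ 3)
    have p2 := mul_le_mul_of_nonneg_left hc3u ht3
    have p3 := mul_le_mul_of_nonneg_left h3l ht2
    have p4 := mul_nonneg (pow_nonneg h0.le 7) hq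
    linarith [key, p1, p2, p3, p4]
  · -- upper: N ≤ Nu ≤ t⁷
    have key : (1 + 2 * t ^ 2) * (t - t ^ 3 / 6 + t ^ 5 / 120) ^ 3
        - 3 * t ^ 3 * ((1 - t ^ 2 / 2 + t ^ 4 / 24 - t ^ 6 / 720) * (t - t ^ 3 / 6) ^ 2)
        - t ^ 3 * (1 - t ^ 2 / 2 + t ^ 4 / 24 - t ^ 6 / 720) ^ 3
        = t ^ 7 * (11/15 - (541/2160) * t ^ 2 + (59/2700) * t ^ 4 + (13/14400) * t ^ 6
          - (59/288000) * t ^ 8 + (13/1152000) * t ^ 10 - (1/4147200) * t ^ 12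
          + (1/373248000) * t ^ 14) := by ring
    have hq : 11/15 - (541/2160) * t ^ 2 + (59/2700) * t ^ 4 + (13/14400) * t ^ 6
          - (59/288000) * t ^ 8 + (13/1152000) * t ^ 10 - (1/4147200) * t ^ 12
          + (1/373248000) * t ^ 14 ≤ 1 := by
      nlinarith [pow_nonneg h0.le 2, pow_nonneg h0.le 4, pow_nonneg h0.le 8,
        pow_nonneg h0.le 12, pow_le_one₀ h0.le h1 (n := 4), pow_le_one₀ h0.le h1 (n := 6),
        pow_le_one₀ h0.le h1 (n := 10), pow_le_one₀ h0.le h1 (n := 14)]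
    have p1 := mul_le_mul_of_nonneg_left hcs2l (by positivity : (0:ℝ) ≤ 3 * t ^ 3)
    have p2 := mul_le_mul_of_nonneg_left hc3l ht3
    have p3 := mul_le_mul_of_nonneg_left h3u ht2
    have p4 := mul_le_mul_of_nonneg_left hq (pow_nonneg h0.le 7)
    linarith [key, p1, p2, p3, p4]

noncomputable def Faux (z : ℝ) : ℝ :=
  1 / (3 * z ^ 3) + 2 * Real.pi ^ 2 / (3 * z)
    - Real.pi ^ 3 * (Real.cos (Real.pi * z) / Real.sin (Real.pi * z))
    - Real.pi ^ 3 / 3 * (Real.cos (Real.pi * z) / Real.sin (Real.pi * z)) ^ 3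

lemma hasDerivAt_cot {z : ℝ} (hs : Real.sin (Real.pi * z) ≠ 0) :
    HasDerivAt (fun z : ℝ => Real.cos (Real.pi * z) / Real.sin (Real.pi * z))
      (-Real.pi / Real.sin (Real.pi * z) ^ 2) z := by
  have hπz : HasDerivAt (fun z : ℝ => Real.pi * z) Real.pi z := by
    simpa using (hasDerivAt_id z).const_mul Real.pi
  have hcos : HasDerivAt (fun z : ℝ => Real.cos (Real.pi * z))
      (-Real.sin (Real.pi * z) * Real.pi) z := (Real.hasDerivAt_cos _).comp z hπz
  have hsin : HasDerivAt (fun z : ℝ => Real.sin (Real.pi * z))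
      (Real.cos (Real.pi * z) * Real.pi) z := (Real.hasDerivAt_sin _).comp z hπz
  have h := hcos.div hsin hs
  refine h.congr_deriv ?_
  have hpyth := Real.sin_sq_add_cos_sq (Real.pi * z)
  field_simp
  linear_combination (-1) * hpyth

lemma hasDerivAt_Faux {z : ℝ} (hz : z ≠ 0) (hs : Real.sin (Real.pi * z) ≠ 0) :
    HasDerivAt Faux
      (Real.pi ^ 4 / Real.sin (Real.pi * z) ^ 4 - 1 / z ^ 4
        - (2 * Real.pi ^ 2 / 3) / z ^ 2) z := by
  have hz3 : z ^ 3 ≠ 0 := pow_ne_zero 3 hz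
  have h1 : HasDerivAt (fun z : ℝ => 1 / (3 * z ^ 3)) (-(z ^ 2) / (z ^ 3) ^ 2) z := by
    have := ((hasDerivAt_pow 3 z).const_mul (3:ℝ)).inv (by simpa using hz3)
    simp only [one_div]
    refine this.congr_deriv ?_
    field_simp
    ring
  have h2 : HasDerivAt (fun z : ℝ => 2 * Real.pi ^ 2 / (3 * z))
      (-(2 * Real.pi ^ 2 / 3) / z ^ 2) z := by
    have h3z : (3:ℝ) * z ≠ 0 := by simpa using hz
    have := (hasDerivAt_const z (2 * Real.pi ^ 2)).div ((hasDerivAt_id z).const_mul (3:ℝ)) h3z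
    refine this.congr_deriv ?_
    simp only [id]
    field_simp
    ring
  have hcot := hasDerivAt_cot hs
  have h3 := hcot.const_mul (Real.pi ^ 3)
  have h4 := (hcot.pow 3).const_mul (Real.pi ^ 3 / 3)
  have h := ((h1.add h2).sub h3).sub h4
  refine h.congr_deriv ?_
  have hpyth := Real.sin_sq_add_cos_sq (Real.pi * z)
  simp only [Nat.cast_ofNat, show (3:ℕ) - 1 = 2 from rfl]
  have hs' : Real.sin (z * Real.pi) ≠ 0 := by rwa [mul_comm]
  field_simp
  linear_combination (3 * z ^ 4 * Real.pi ^ 4) * Real.sin_sq_add_cos_sq (z * Real.pi)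



lemma tendsto_Faux_zero : Filter.Tendsto Faux (nhdsWithin 0 (Set.Ioi 0)) (nhds 0) := by
  apply squeeze_zero_norm'
  · filter_upwards [Ioo_mem_nhdsGT_of_mem (by norm_num : (0:ℝ) ∈ Set.Ico 0 (1/4))] with z hz
    obtain ⟨hz0, hz4⟩ := hz
    set t := Real.pi * z with htdef
    have ht0 : 0 < t := by positivity
    have ht1 : t ≤ 1 := by
      have := Real.pi_lt_d2
      nlinarith
    have htπ : t < Real.pi := by nlinarith [Real.pi_pos]
    set s := Real.sin t with hsdef
    set c := Real.cos t with hcdef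
    have hs0 : 0 < s := Real.sin_pos_of_pos_of_lt_pi ht0 htπ
    obtain ⟨hN0, hNu⟩ := N_poly ht0 ht1 (sin_ge_aux ht0.le) (sin_le_aux ht0.le)
      (cos_ge_aux ht0.le) (cos_le_aux ht0.le)
    have hs56 : 5/6 * t ≤ s := by
      have := sin_ge_aux ht0.le
      nlinarith
    have hs3 : 125/216 * t ^ 3 ≤ s ^ 3 := by
      have h := pow_le_pow_left₀ (by positivity : (0:ℝ) ≤ 5/6 * t) hs56 3
      nlinarith [h]
    have hFaux : Faux z = Real.pi ^ 3 / 3 *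
        ((s ^ 3 + 2 * t ^ 2 * s ^ 3 - 3 * t ^ 3 * c * s ^ 2 - t ^ 3 * c ^ 3)
          / (t ^ 3 * s ^ 3)) := by
      rw [Faux, ← hsdef, ← hcdef]
      rw [htdef]
      field_simp
    have hden : (0:ℝ) < t ^ 3 * s ^ 3 := by positivity
    have hF0 : 0 ≤ Faux z := by
      rw [hFaux]
      positivity
    have hFle : Faux z ≤ 72/125 * Real.pi ^ 4 * z := by
      rw [hFaux]
      have h1 : (s ^ 3 + 2 * t ^ 2 * s ^ 3 - 3 * t ^ 3 * c * s ^ 2 - t ^ 3 * c ^ 3)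
          / (t ^ 3 * s ^ 3) ≤ 216/125 * t := by
        rw [div_le_iff₀ hden]
        nlinarith [pow_pos ht0 3, pow_pos ht0 7]
      have hπ := Real.pi_pos
      calc Real.pi ^ 3 / 3 * ((s ^ 3 + 2 * t ^ 2 * s ^ 3 - 3 * t ^ 3 * c * s ^ 2
            - t ^ 3 * c ^ 3) / (t ^ 3 * s ^ 3))
          ≤ Real.pi ^ 3 / 3 * (216/125 * t) := by
            apply mul_le_mul_of_nonneg_left h1 (by positivity)
        _ = 72/125 * Real.pi ^ 4 * z := by rw [htdef]; ring
    simpa [Real.norm_eq_abs, abs_of_nonneg hF0] using hFle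
  · have : Filter.Tendsto (fun z : ℝ => 72/125 * Real.pi ^ 4 * z) (nhds 0) (nhds 0) := by
      simpa using (continuous_mul_left (72/125 * Real.pi ^ 4)).tendsto (0:ℝ)
    exact this.mono_left (nhdsWithin_le_nhds (s := Set.Ioi (0:ℝ)))

lemma tendsto_Faux_half :
    Filter.Tendsto Faux (nhdsWithin (1/2) (Set.Iio (1/2:ℝ)))
      (nhds (8/3 + 4 * Real.pi ^ 2 / 3)) := by
  have hs : Real.sin (Real.pi * (1/2)) ≠ 0 := by
    rw [show Real.pi * (1/2) = Real.pi / 2 by ring, Real.sin_pi_div_two]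
    norm_num
  have hc : ContinuousAt Faux (1/2) := (hasDerivAt_Faux (by norm_num) hs).continuousAt
  have hval : Faux (1/2) = 8/3 + 4 * Real.pi ^ 2 / 3 := by
    rw [Faux, show Real.pi * (1/2) = Real.pi / 2 by ring, Real.sin_pi_div_two,
      Real.cos_pi_div_two]
    norm_num
    ring
  rw [← hval]
  exact hc.continuousWithinAt

lemma integrableOn_g : IntegrableOn
    (fun z : ℝ => Real.pi ^ 4 / Real.sin (Real.pi * z) ^ 4 - 1 / z ^ 4
      - (2 * Real.pi ^ 2 / 3) / z ^ 2) (Set.Ioc 0 (1/2)) volume := by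
  apply Measure.integrableOn_of_bounded (M := Real.pi ^ 8 / 48)
  case s_finite =>
    rw [Real.volume_Ioc]
    exact ENNReal.ofReal_ne_top
  case f_mble =>
    apply Measurable.aestronglyMeasurable
    have m1 : Measurable fun z : ℝ => Real.sin (Real.pi * z) :=
      (Real.continuous_sin.comp (continuous_const.mul continuous_id)).measurable
    exact ((measurable_const.div (m1.pow_const 4)).sub
      (measurable_const.div (measurable_id.pow_const 4))).sub
      (measurable_const.div (measurable_id.pow_const 2))
  case f_bdd =>
    rw [ae_restrict_iff' measurableSet_Ioc]
    filter_upwards with z hz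
    obtain ⟨hz0, hz2⟩ := hz
    set t := Real.pi * z with htdef
    have ht0 : 0 < t := by positivity
    have hπ31 := Real.pi_lt_d2
    have hπ0 := Real.pi_pos
    have htπ2 : t ≤ Real.pi / 2 := by
      have h := mul_le_mul_of_nonneg_left hz2 hπ0.le
      rw [htdef]
      linarith
    have ht16 : t ≤ 1.6 := le_trans htπ2 (by nlinarith)
    have htπ : t < Real.pi := lt_of_le_of_lt htπ2 (by nlinarith)
    set s := Real.sin t with hsdef
    have hs0 : 0 < s := Real.sin_pos_of_pos_of_lt_pi ht0 htπ
    obtain ⟨hM0, hMu⟩ := M_bound ht0 ht16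
    rw [← hsdef] at hM0 hMu
    have hs2π : 2 / Real.pi * t ≤ s := Real.mul_le_sin ht0.le htπ2
    have hs4 : 16 / Real.pi ^ 4 * t ^ 4 ≤ s ^ 4 := by
      have h := pow_le_pow_left₀ (by positivity) hs2π 4
      calc 16 / Real.pi ^ 4 * t ^ 4 = (2 / Real.pi * t) ^ 4 := by ring
        _ ≤ s ^ 4 := h
    have hg : Real.pi ^ 4 / s ^ 4 - 1 / z ^ 4 - (2 * Real.pi ^ 2 / 3) / z ^ 2
        = Real.pi ^ 4 * (3 * t ^ 4 - 3 * s ^ 4 - 2 * t ^ 2 * s ^ 4) / (3 * t ^ 4 * s ^ 4) := by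
      rw [htdef]
      field_simp
    have hden : (0:ℝ) < 3 * t ^ 4 * s ^ 4 := by positivity
    have hg0 : 0 ≤ Real.pi ^ 4 / s ^ 4 - 1 / z ^ 4 - (2 * Real.pi ^ 2 / 3) / z ^ 2 := by
      rw [hg]
      positivity
    have hgle : Real.pi ^ 4 / s ^ 4 - 1 / z ^ 4 - (2 * Real.pi ^ 2 / 3) / z ^ 2
        ≤ Real.pi ^ 8 / 48 := by
      rw [hg, div_le_iff₀ hden]
      have h1 : Real.pi ^ 4 * (3 * t ^ 4 - 3 * s ^ 4 - 2 * t ^ 2 * s ^ 4)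
          ≤ Real.pi ^ 4 * t ^ 8 := mul_le_mul_of_nonneg_left hMu (by positivity)
      have h2 : Real.pi ^ 4 * t ^ 8 ≤ Real.pi ^ 8 / 48 * (3 * t ^ 4 * s ^ 4) := by
        have := mul_le_mul_of_nonneg_left hs4 (by positivity : (0:ℝ) ≤ Real.pi ^ 8 / 48 * (3 * t ^ 4))
        calc Real.pi ^ 4 * t ^ 8 = Real.pi ^ 8 / 48 * (3 * t ^ 4) * (16 / Real.pi ^ 4 * t ^ 4) := by
              field_simp; ring
          _ ≤ Real.pi ^ 8 / 48 * (3 * t ^ 4) * s ^ 4 := by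
              apply mul_le_mul_of_nonneg_left hs4 (by positivity)
          _ = Real.pi ^ 8 / 48 * (3 * t ^ 4 * s ^ 4) := by ring
      linarith
    rw [Real.norm_eq_abs, abs_of_nonneg hg0]
    exact hgle

/-- `∫₀^{1/2} [π⁴/sin⁴(πz) − 1/z⁴ − (2π²/3)/z²] dz` converges and equals
`(4/3)(2 + π²)`. -/
theorem integral_sin_pow_four_subtracted :
    IntegrableOn
      (fun z : ℝ => Real.pi ^ 4 / Real.sin (Real.pi * z) ^ 4 - 1 / z ^ 4
        - (2 * Real.pi ^ 2 / 3) / z ^ 2) (Set.Ioo 0 (1/2)) ∧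
    ∫ z in Set.Ioo (0:ℝ) (1/2),
        (Real.pi ^ 4 / Real.sin (Real.pi * z) ^ 4 - 1 / z ^ 4
          - (2 * Real.pi ^ 2 / 3) / z ^ 2)
      = (4 / 3) * (2 + Real.pi ^ 2) := by
  constructor
  · exact integrableOn_g.mono_set Set.Ioo_subset_Ioc_self
  · rw [← integral_Ioc_eq_integral_Ioo, ← intervalIntegral.integral_of_le (by norm_num : (0:ℝ) ≤ 1/2)]
    have hderiv : ∀ x ∈ Set.Ioo (0:ℝ) (1/2),
        HasDerivAt Faux (Real.pi ^ 4 / Real.sin (Real.pi * x) ^ 4 - 1 / x ^ 4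
          - (2 * Real.pi ^ 2 / 3) / x ^ 2) x := by
      intro x hx
      have hπ0 := Real.pi_pos
      have hs : Real.sin (Real.pi * x) ≠ 0 := by
        apply ne_of_gt
        apply Real.sin_pos_of_pos_of_lt_pi (by nlinarith [hx.1])
        nlinarith [hx.2]
      exact hasDerivAt_Faux (ne_of_gt hx.1) hs
    have hint : IntervalIntegrable
        (fun z : ℝ => Real.pi ^ 4 / Real.sin (Real.pi * z) ^ 4 - 1 / z ^ 4
          - (2 * Real.pi ^ 2 / 3) / z ^ 2) volume 0 (1/2) :=
      (intervalIntegrable_iff_integrableOn_Ioc_of_le (by norm_num)).2 integrableOn_g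
    rw [intervalIntegral.integral_eq_sub_of_hasDerivAt_of_tendsto (by norm_num) hderiv hint
      tendsto_Faux_zero tendsto_Faux_half]
    ring
end
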